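/- arXiv:0712.1656 — 5 statements merged into one kernel-verified Lean document; each statement's English description precedes it below -/
import Mathlib

section
/- For all positive integers a, b and all complex z with |z| < 1: Li_{a,b}(z) = (-1)^b * sum_{k=1}^{a} C(a+b-k-1, b-1) * Li_{k, a+b-k}(z) + sum_{k=1}^{b} (-1)^{b-k} * C(a+b-k-1, a-1) * Li_k(z) * Li_{a+b-k}(z). -/
open scoped BigOperators
open Finset

/-- Multiple polylogarithm `Li_{s_1,...,s_l}(z) = ∑_{n_1 > ... > n_l ≥ 1} z^{n_1}/(n_1^{s_1}⋯n_l^{s_l})`. -/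
noncomputable def multiLi (s : List ℕ) (z : ℂ) : ℂ :=
  ∑' f : {f : Fin s.length → ℕ // StrictAnti f ∧ ∀ i, 1 ≤ f i},
    (if h : 0 < s.length then z ^ f.1 ⟨0, h⟩ else 1) /
      ∏ i, (f.1 i : ℂ) ^ s.get i

/- ### Algebraic partial fraction identity -/

private lemma pf1b (X Y D : ℂ) (h : X * Y = D * (Y - X)) :
    ∀ b : ℕ, 1 ≤ b → X * Y ^ b =
      (-1 : ℂ) ^ b * (X * D ^ b) +
        ∑ k ∈ Icc 1 b, (-1 : ℂ) ^ (b - k) * (Y ^ k * D ^ (1 + b - k)) := by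
  intro b hb
  induction b, hb using Nat.le_induction with
  | base => simp; linear_combination h
  | succ b hb IH =>
    have hs : ∑ k ∈ Icc 1 b, (-1:ℂ)^(b+1-k) * (Y^k * D^(1+(b+1)-k))
        = -D * ∑ k ∈ Icc 1 b, (-1:ℂ)^(b-k) * (Y^k * D^(1+b-k)) := by
      rw [Finset.mul_sum]
      refine Finset.sum_congr rfl fun k hk => ?_
      obtain ⟨hk1, hk2⟩ := mem_Icc.mp hk
      have e1 : b+1-k = (b-k)+1 := by omega
      have e2 : 1+(b+1)-k = (1+b-k)+1 := by omega
      rw [e1, e2, pow_succ, pow_succ]; ring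
    rw [Finset.sum_Icc_succ_top (by omega : 1 ≤ b+1), hs]
    simp only [Nat.sub_self, Nat.add_sub_cancel, pow_zero, pow_one, one_mul]
    linear_combination Y^b * h - D * IH

private lemma pfa1 (X Y D : ℂ) (h : X * Y = D * (Y - X)) :
    ∀ a : ℕ, 1 ≤ a → X ^ a * Y =
      (-1 : ℂ) * ∑ k ∈ Icc 1 a, (X ^ k * D ^ (a + 1 - k)) + Y * D ^ a := by
  intro a ha
  induction a, ha using Nat.le_induction with
  | base =>
    simp only [Finset.Icc_self, Finset.sum_singleton, pow_one]
    linear_combination h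
  | succ a ha IH =>
    have hs : ∑ k ∈ Icc 1 a, (X^k * D^(a+1+1-k))
        = D * ∑ k ∈ Icc 1 a, (X^k * D^(a+1-k)) := by
      rw [Finset.mul_sum]
      refine Finset.sum_congr rfl fun k hk => ?_
      obtain ⟨hk1, hk2⟩ := mem_Icc.mp hk
      have e1 : a+1+1-k = (a+1-k)+1 := by omega
      rw [e1, pow_succ]; ring
    rw [Finset.sum_Icc_succ_top (by omega : 1 ≤ a+1), hs,
      show a+1+1-(a+1) = 1 by omega, pow_one]
    linear_combination X^a * h + D * IH

private lemma pascal' (n m : ℕ) (hm : 1 ≤ m) :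
    (n + 1).choose m = n.choose (m - 1) + n.choose m := by
  obtain ⟨m, rfl⟩ : ∃ m', m = m' + 1 := ⟨m - 1, by omega⟩
  simp [Nat.choose_succ_succ]

private lemma pfXY (X Y D : ℂ) (h : X * Y = D * (Y - X)) :
    ∀ a : ℕ, 1 ≤ a → ∀ b : ℕ, 1 ≤ b →
    X ^ a * Y ^ b =
      (-1 : ℂ) ^ b * ∑ k ∈ Icc 1 a,
          ((a + b - k - 1).choose (b - 1) : ℂ) * (X ^ k * D ^ (a + b - k))
      + ∑ k ∈ Icc 1 b, (-1 : ℂ) ^ (b - k) *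
          ((a + b - k - 1).choose (a - 1) : ℂ) * (Y ^ k * D ^ (a + b - k)) := by
  intro a ha
  induction a, ha using Nat.le_induction with
  | base =>
    intro b hb
    have h1 : ∑ k ∈ Icc 1 1, ((1 + b - k - 1).choose (b - 1) : ℂ) * (X ^ k * D ^ (1 + b - k))
        = X * D ^ b := by
      rw [Finset.Icc_self, Finset.sum_singleton, show 1+b-1-1 = b-1 by omega,
        show 1+b-1 = b by omega, Nat.choose_self, pow_one]
      push_cast; ring
    have h2 : ∑ k ∈ Icc 1 b, (-1:ℂ)^(b-k) * ((1 + b - k - 1).choose (1 - 1) : ℂ) *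
          (Y ^ k * D ^ (1 + b - k))
        = ∑ k ∈ Icc 1 b, (-1:ℂ)^(b-k) * (Y ^ k * D ^ (1 + b - k)) := by
      refine Finset.sum_congr rfl fun k hk => ?_
      rw [show (1:ℕ)-1 = 0 from rfl, Nat.choose_zero_right]
      push_cast; ring
    rw [h1, h2, pow_one]
    exact pf1b X Y D h b hb
  | succ a ha IHa =>
    intro b hb
    induction b, hb using Nat.le_induction with
    | base =>
      have h1 : ∑ k ∈ Icc 1 (a+1), ((a + 1 + 1 - k - 1).choose (1 - 1) : ℂ) *
            (X ^ k * D ^ (a + 1 + 1 - k))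
          = ∑ k ∈ Icc 1 (a+1), (X ^ k * D ^ (a + 1 + 1 - k)) := by
        refine Finset.sum_congr rfl fun k hk => ?_
        rw [show (1:ℕ)-1 = 0 from rfl, Nat.choose_zero_right]
        push_cast; ring
      have h2 : ∑ k ∈ Icc 1 1, (-1:ℂ)^(1-k) * ((a + 1 + 1 - k - 1).choose (a + 1 - 1) : ℂ) *
            (Y ^ k * D ^ (a + 1 + 1 - k))
          = Y * D ^ (a+1) := by
        rw [Finset.Icc_self, Finset.sum_singleton, show a+1+1-1-1 = a+1-1 by omega,
          Nat.choose_self, show a+1+1-1 = a+1 by omega, pow_one]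
        push_cast; ring
      rw [h1, h2, pow_one]
      have := pfa1 X Y D h (a+1) (by omega)
      linear_combination this
    | succ b hb IHb =>
      have IHa' := IHa (b+1) (by omega)
      have H1 : ∑ k ∈ Icc 1 (a+1),
            ((a + 1 + (b + 1) - k - 1).choose (b + 1 - 1) : ℂ) *
              (X ^ k * D ^ (a + 1 + (b + 1) - k))
          = D * ∑ k ∈ Icc 1 a,
              ((a + (b + 1) - k - 1).choose (b + 1 - 1) : ℂ) * (X ^ k * D ^ (a + (b + 1) - k))
          + D * ∑ k ∈ Icc 1 (a+1),
              ((a + 1 + b - k - 1).choose (b - 1) : ℂ) * (X ^ k * D ^ (a + 1 + b - k)) := by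
        rw [Finset.sum_Icc_succ_top (by omega : 1 ≤ a+1),
          Finset.sum_Icc_succ_top (by omega : 1 ≤ a+1)]
        have h3 : ∀ k ∈ Icc 1 a,
            ((a + 1 + (b + 1) - k - 1).choose (b + 1 - 1) : ℂ) *
              (X ^ k * D ^ (a + 1 + (b + 1) - k))
            = D * (((a + (b + 1) - k - 1).choose (b + 1 - 1) : ℂ) *
                (X ^ k * D ^ (a + (b + 1) - k)))
            + D * (((a + 1 + b - k - 1).choose (b - 1) : ℂ) *
                (X ^ k * D ^ (a + 1 + b - k))) := by
          intro k hk
          obtain ⟨hk1, hk2⟩ := mem_Icc.mp hk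
          rw [show b+1-1 = b by omega, show a+1+(b+1)-k-1 = a+b-k+1 by omega,
            show a+(b+1)-k-1 = a+b-k by omega, show a+1+b-k-1 = a+b-k by omega,
            show a+1+(b+1)-k = (a+b-k)+2 by omega, show a+(b+1)-k = (a+b-k)+1 by omega,
            show a+1+b-k = (a+b-k)+1 by omega, pascal' (a+b-k) b hb]
          push_cast; ring
        rw [Finset.sum_congr rfl h3, Finset.sum_add_distrib, ← Finset.mul_sum, ← Finset.mul_sum,
          show a+1+(b+1)-(a+1)-1 = b by omega, show b+1-1 = b by omega, Nat.choose_self,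
          show a+1+(b+1)-(a+1) = b+1 by omega, show a+1+b-(a+1)-1 = b-1 by omega,
          Nat.choose_self, show a+1+b-(a+1) = b by omega]
        push_cast; ring
      have H2 : ∑ k ∈ Icc 1 (b+1), (-1:ℂ)^(b+1-k) *
            ((a + 1 + (b + 1) - k - 1).choose (a + 1 - 1) : ℂ) *
              (Y ^ k * D ^ (a + 1 + (b + 1) - k))
          = D * ∑ k ∈ Icc 1 (b+1), (-1:ℂ)^(b+1-k) *
              ((a + (b + 1) - k - 1).choose (a - 1) : ℂ) * (Y ^ k * D ^ (a + (b + 1) - k))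
          - D * ∑ k ∈ Icc 1 b, (-1:ℂ)^(b-k) *
              ((a + 1 + b - k - 1).choose (a + 1 - 1) : ℂ) * (Y ^ k * D ^ (a + 1 + b - k)) := by
        rw [Finset.sum_Icc_succ_top (by omega : 1 ≤ b+1),
          Finset.sum_Icc_succ_top (by omega : 1 ≤ b+1)]
        have h3 : ∀ k ∈ Icc 1 b,
            (-1:ℂ)^(b+1-k) * ((a + 1 + (b + 1) - k - 1).choose (a + 1 - 1) : ℂ) *
              (Y ^ k * D ^ (a + 1 + (b + 1) - k))
            = D * ((-1:ℂ)^(b+1-k) * ((a + (b + 1) - k - 1).choose (a - 1) : ℂ) *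
                (Y ^ k * D ^ (a + (b + 1) - k)))
            - D * ((-1:ℂ)^(b-k) * ((a + 1 + b - k - 1).choose (a + 1 - 1) : ℂ) *
                (Y ^ k * D ^ (a + 1 + b - k))) := by
          intro k hk
          obtain ⟨hk1, hk2⟩ := mem_Icc.mp hk
          rw [show b+1-k = (b-k)+1 by omega, show a+1-1 = a by omega,
            show a+1+(b+1)-k-1 = a+b-k+1 by omega, show a+(b+1)-k-1 = a+b-k by omega,
            show a+1+b-k-1 = a+b-k by omega, show a+1+(b+1)-k = (a+b-k)+2 by omega,
            show a+(b+1)-k = (a+b-k)+1 by omega, show a+1+b-k = (a+b-k)+1 by omega,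
            pascal' (a+b-k) a ha]
          push_cast; ring
        rw [Finset.sum_congr rfl h3, Finset.sum_sub_distrib, ← Finset.mul_sum, ← Finset.mul_sum,
          show b+1-(b+1) = 0 by omega, show a+1+(b+1)-(b+1)-1 = a by omega,
          show a+1-1 = a by omega, Nat.choose_self,
          show a+1+(b+1)-(b+1) = a+1 by omega, show a+(b+1)-(b+1)-1 = a-1 by omega,
          Nat.choose_self, show a+(b+1)-(b+1) = a by omega]
        push_cast; ring
      rw [H1, H2]
      linear_combination (X^a * Y^b) * h + D * IHa' - D * IHb

private lemma pf_md (m n d w : ℂ) (hm : m ≠ 0) (hn : n ≠ 0) (hd : d ≠ 0) (hmnd : m = n + d)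
    (a b : ℕ) (ha : 1 ≤ a) (hb : 1 ≤ b) :
    w / (m ^ a * n ^ b) =
      (-1:ℂ)^b * ∑ k ∈ Icc 1 a,
          ((a+b-k-1).choose (b-1) : ℂ) * (w / (m^k * d^(a+b-k)))
      + ∑ k ∈ Icc 1 b, (-1:ℂ)^(b-k) *
          ((a+b-k-1).choose (a-1) : ℂ) * (w / (n^k * d^(a+b-k))) := by
  have h : (1/m) * (1/n) = (1/d) * ((1/n) - (1/m)) := by
    field_simp
    linear_combination -hmnd
  have key := pfXY (1/m) (1/n) (1/d) h a ha b hb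
  have t0 : w / (m^a * n^b) = w * ((1/m)^a * (1/n)^b) := by
    rw [one_div, one_div, inv_pow, inv_pow, div_eq_mul_inv, mul_inv]
  have t1 : ∑ k ∈ Icc 1 a, ((a+b-k-1).choose (b-1):ℂ) * (w / (m^k * d^(a+b-k)))
      = w * ∑ k ∈ Icc 1 a, ((a+b-k-1).choose (b-1):ℂ) * ((1/m)^k * (1/d)^(a+b-k)) := by
    rw [Finset.mul_sum]
    refine Finset.sum_congr rfl fun k hk => ?_
    rw [one_div, one_div, inv_pow, inv_pow, div_eq_mul_inv, mul_inv]; ring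
  have t2 : ∑ k ∈ Icc 1 b, (-1:ℂ)^(b-k) * ((a+b-k-1).choose (a-1):ℂ) * (w / (n^k * d^(a+b-k)))
      = w * ∑ k ∈ Icc 1 b, (-1:ℂ)^(b-k) * ((a+b-k-1).choose (a-1):ℂ) *
          ((1/n)^k * (1/d)^(a+b-k)) := by
    rw [Finset.mul_sum]
    refine Finset.sum_congr rfl fun k hk => ?_
    rw [one_div, one_div, inv_pow, inv_pow, div_eq_mul_inv, mul_inv]; ring
  rw [t0, t1, t2]
  linear_combination w * key

/- ### Reindexing -/

private def pairEquiv : ℕ × ℕ ≃ {f : Fin 2 → ℕ // StrictAnti f ∧ ∀ i, 1 ≤ f i} where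
  toFun p := ⟨![p.1 + p.2 + 2, p.2 + 1], by
      constructor
      · intro i j hij
        fin_cases i <;> fin_cases j <;> simp_all <;> omega
      · intro i; fin_cases i <;> simp⟩
  invFun f := (f.1 0 - f.1 1 - 1, f.1 1 - 1)
  left_inv p := by
    obtain ⟨i, j⟩ := p
    simp [Prod.ext_iff]
    omega
  right_inv f := by
    obtain ⟨g, hg1, hg2⟩ := f
    have h01 : g 1 < g 0 := hg1 (by norm_num)
    have h1 : 1 ≤ g 1 := hg2 1
    ext i
    fin_cases i <;> simp <;> omega

private lemma multiLi_pair (s t : ℕ) (z : ℂ) :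
    multiLi [s, t] z =
      ∑' p : ℕ × ℕ, z ^ (p.1 + p.2 + 2) /
        (((p.1 + p.2 + 2 : ℕ) : ℂ) ^ s * ((p.2 + 1 : ℕ) : ℂ) ^ t) := by
  have h2 : multiLi [s, t] z =
      ∑' f : {f : Fin 2 → ℕ // StrictAnti f ∧ ∀ i, 1 ≤ f i},
        (if h : (0:ℕ) < 2 then z ^ f.1 ⟨0, h⟩ else 1) /
          ∏ i, (f.1 i : ℂ) ^ [s, t].get i := rfl
  rw [h2, ← pairEquiv.tsum_eq]
  refine tsum_congr fun p => ?_
  simp [pairEquiv, Fin.prod_univ_two]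

private def singleEquiv : ℕ ≃ {f : Fin 1 → ℕ // StrictAnti f ∧ ∀ i, 1 ≤ f i} where
  toFun n := ⟨![n + 1], by
      constructor
      · intro i j hij
        rw [Subsingleton.elim i j] at hij
        exact absurd hij (lt_irrefl _)
      · intro i; fin_cases i <;> simp⟩
  invFun f := f.1 0 - 1
  left_inv n := by simp
  right_inv f := by
    obtain ⟨g, hg1, hg2⟩ := f
    have h1 : 1 ≤ g 0 := hg2 0
    ext i
    fin_cases i <;> simp <;> omega

private lemma multiLi_single (s : ℕ) (z : ℂ) :
    multiLi [s] z = ∑' n : ℕ, z ^ (n + 1) / ((n + 1 : ℕ) : ℂ) ^ s := by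
  have h2 : multiLi [s] z =
      ∑' f : {f : Fin 1 → ℕ // StrictAnti f ∧ ∀ i, 1 ≤ f i},
        (if h : (0:ℕ) < 1 then z ^ f.1 ⟨0, h⟩ else 1) /
          ∏ i, (f.1 i : ℂ) ^ [s].get i := rfl
  rw [h2, ← singleEquiv.tsum_eq]
  refine tsum_congr fun n => ?_
  simp [singleEquiv]

/- ### Summability -/

private lemma sum_geo (z : ℂ) (hz : ‖z‖ < 1) : Summable fun i : ℕ => ‖z‖ ^ (i + 1) := by
  simpa [pow_succ] using
    (summable_geometric_of_lt_one (norm_nonneg z) hz).mul_right ‖z‖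

private lemma sum_prod (z : ℂ) (hz : ‖z‖ < 1) :
    Summable fun p : ℕ × ℕ => ‖z‖ ^ (p.1 + 1) * ‖z‖ ^ (p.2 + 1) := by
  apply (sum_geo z hz).mul_of_nonneg (sum_geo z hz) <;> intro i <;> positivity

private lemma one_le_norm_nat (k : ℕ) (hk : 1 ≤ k) : (1:ℝ) ≤ ‖(k : ℂ)‖ := by
  rw [Complex.norm_natCast]; exact_mod_cast hk

private lemma bound_div (z : ℂ) (i j s t : ℕ) (A B : ℂ) (hA : 1 ≤ ‖A‖) (hB : 1 ≤ ‖B‖) :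
    ‖z ^ (i + j + 2) / (A ^ s * B ^ t)‖ ≤ ‖z‖ ^ (i + 1) * ‖z‖ ^ (j + 1) := by
  rw [norm_div, norm_mul, norm_pow, norm_pow, norm_pow]
  have hAs : (1:ℝ) ≤ ‖A‖ ^ s := by
    simpa using pow_le_pow_left₀ zero_le_one hA s
  have hBt : (1:ℝ) ≤ ‖B‖ ^ t := by
    simpa using pow_le_pow_left₀ zero_le_one hB t
  calc ‖z‖ ^ (i + j + 2) / (‖A‖ ^ s * ‖B‖ ^ t) ≤ ‖z‖ ^ (i + j + 2) :=
        div_le_self (by positivity) (by nlinarith)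
    _ = ‖z‖ ^ (i + 1) * ‖z‖ ^ (j + 1) := by
        rw [← pow_add]; congr 1; omega

private lemma summable_of_bound (z : ℂ) (hz : ‖z‖ < 1) (F : ℕ × ℕ → ℂ)
    (hF : ∀ p : ℕ × ℕ, ‖F p‖ ≤ ‖z‖ ^ (p.1 + 1) * ‖z‖ ^ (p.2 + 1)) : Summable F :=
  Summable.of_norm_bounded (sum_prod z hz) hF

private lemma bound_single (z : ℂ) (n s : ℕ) :
    ‖z ^ (n + 1) / ((n + 1 : ℕ) : ℂ) ^ s‖ ≤ ‖z‖ ^ (n + 1) := by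
  have h1 : (1:ℝ) ≤ ‖((n + 1 : ℕ) : ℂ) ^ s‖ := by
    rw [norm_pow]
    simpa using pow_le_pow_left₀ zero_le_one (one_le_norm_nat (n+1) (by omega)) s
  rw [norm_div, norm_pow]
  exact div_le_self (by positivity) h1

private lemma summable_single (z : ℂ) (hz : ‖z‖ < 1) (s : ℕ) :
    Summable fun n : ℕ => z ^ (n + 1) / ((n + 1 : ℕ) : ℂ) ^ s :=
  Summable.of_norm_bounded (sum_geo z hz) fun n => bound_single z n s

/- ### The two tsum evaluations -/

private lemma tsum_swap_eq (z : ℂ) (s t : ℕ) :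
    ∑' p : ℕ × ℕ, z ^ (p.1 + p.2 + 2) /
        (((p.1 + p.2 + 2 : ℕ) : ℂ) ^ s * ((p.1 + 1 : ℕ) : ℂ) ^ t)
      = multiLi [s, t] z := by
  rw [multiLi_pair, ← (Equiv.prodComm ℕ ℕ).tsum_eq]
  refine tsum_congr fun p => ?_
  simp only [Equiv.prodComm_apply, Prod.fst_swap, Prod.snd_swap]
  rw [show p.2 + p.1 = p.1 + p.2 from Nat.add_comm _ _]

private lemma tsum_prod_eq (z : ℂ) (hz : ‖z‖ < 1) (k l : ℕ) :
    ∑' p : ℕ × ℕ, z ^ (p.1 + p.2 + 2) /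
        (((p.2 + 1 : ℕ) : ℂ) ^ k * ((p.1 + 1 : ℕ) : ℂ) ^ l)
      = multiLi [k] z * multiLi [l] z := by
  have hf := summable_single z hz k
  have hg := summable_single z hz l
  have hgf : Summable fun x : ℕ × ℕ =>
      (z ^ (x.1 + 1) / ((x.1 + 1 : ℕ) : ℂ) ^ l) * (z ^ (x.2 + 1) / ((x.2 + 1 : ℕ) : ℂ) ^ k) := by
    refine summable_of_bound z hz _ fun p => ?_
    rw [norm_mul]
    exact mul_le_mul (bound_single z p.1 l) (bound_single z p.2 k)
      (norm_nonneg _) (by positivity)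
  calc ∑' p : ℕ × ℕ, z ^ (p.1 + p.2 + 2) /
        (((p.2 + 1 : ℕ) : ℂ) ^ k * ((p.1 + 1 : ℕ) : ℂ) ^ l)
      = ∑' p : ℕ × ℕ,
          (z ^ (p.1 + 1) / ((p.1 + 1 : ℕ) : ℂ) ^ l) *
            (z ^ (p.2 + 1) / ((p.2 + 1 : ℕ) : ℂ) ^ k) := by
        refine tsum_congr fun p => ?_
        rw [show p.1 + p.2 + 2 = (p.1 + 1) + (p.2 + 1) by omega, pow_add]
        ring
    _ = multiLi [l] z * multiLi [k] z := by
        rw [multiLi_single, multiLi_single]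
        exact (Summable.tsum_mul_tsum hg hf hgf).symm
    _ = multiLi [k] z * multiLi [l] z := mul_comm _ _

/- ### Main theorem -/

theorem multiLi_partial_fraction (a b : ℕ) (ha : 1 ≤ a) (hb : 1 ≤ b)
    (z : ℂ) (hz : ‖z‖ < 1) :
    multiLi [a, b] z =
      (-1 : ℂ) ^ b * ∑ k ∈ Finset.Icc 1 a,
          ((a + b - k - 1).choose (b - 1) : ℂ) * multiLi [k, a + b - k] z
      + ∑ k ∈ Finset.Icc 1 b,
          (-1 : ℂ) ^ (b - k) * ((a + b - k - 1).choose (a - 1) : ℂ) *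
            multiLi [k] z * multiLi [a + b - k] z := by
  have step : ∀ p : ℕ × ℕ,
      z ^ (p.1 + p.2 + 2) / (((p.1 + p.2 + 2 : ℕ) : ℂ) ^ a * ((p.2 + 1 : ℕ) : ℂ) ^ b)
      = (-1:ℂ)^b * ∑ k ∈ Icc 1 a, ((a+b-k-1).choose (b-1) : ℂ) *
            (z ^ (p.1 + p.2 + 2) /
              (((p.1 + p.2 + 2 : ℕ) : ℂ) ^ k * ((p.1 + 1 : ℕ) : ℂ) ^ (a+b-k)))
        + ∑ k ∈ Icc 1 b, (-1:ℂ)^(b-k) * ((a+b-k-1).choose (a-1) : ℂ) *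
            (z ^ (p.1 + p.2 + 2) /
              (((p.2 + 1 : ℕ) : ℂ) ^ k * ((p.1 + 1 : ℕ) : ℂ) ^ (a+b-k))) := by
    intro p
    refine pf_md _ _ _ _ ?_ ?_ ?_ ?_ a b ha hb
    · exact Nat.cast_ne_zero.mpr (by omega)
    · exact Nat.cast_ne_zero.mpr (by omega)
    · exact Nat.cast_ne_zero.mpr (by omega)
    · push_cast; ring
  have SF1 : ∀ k : ℕ, Summable fun p : ℕ × ℕ =>
      z ^ (p.1 + p.2 + 2) /
        (((p.1 + p.2 + 2 : ℕ) : ℂ) ^ k * ((p.1 + 1 : ℕ) : ℂ) ^ (a+b-k)) := by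
    intro k
    refine summable_of_bound z hz _ fun p => ?_
    exact bound_div z p.1 p.2 k (a+b-k) _ _
      (one_le_norm_nat _ (by omega)) (one_le_norm_nat _ (by omega))
  have SF2 : ∀ k : ℕ, Summable fun p : ℕ × ℕ =>
      z ^ (p.1 + p.2 + 2) /
        (((p.2 + 1 : ℕ) : ℂ) ^ k * ((p.1 + 1 : ℕ) : ℂ) ^ (a+b-k)) := by
    intro k
    refine summable_of_bound z hz _ fun p => ?_
    exact bound_div z p.1 p.2 k (a+b-k) _ _
      (one_le_norm_nat _ (by omega)) (one_le_norm_nat _ (by omega))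
  have S1 : Summable fun p : ℕ × ℕ =>
      (-1:ℂ)^b * ∑ k ∈ Icc 1 a, ((a+b-k-1).choose (b-1) : ℂ) *
        (z ^ (p.1 + p.2 + 2) /
          (((p.1 + p.2 + 2 : ℕ) : ℂ) ^ k * ((p.1 + 1 : ℕ) : ℂ) ^ (a+b-k))) :=
    (summable_sum fun k _ => (SF1 k).mul_left _).mul_left _
  have S2 : Summable fun p : ℕ × ℕ =>
      ∑ k ∈ Icc 1 b, (-1:ℂ)^(b-k) * ((a+b-k-1).choose (a-1) : ℂ) *
        (z ^ (p.1 + p.2 + 2) /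
          (((p.2 + 1 : ℕ) : ℂ) ^ k * ((p.1 + 1 : ℕ) : ℂ) ^ (a+b-k))) :=
    summable_sum fun k _ => (SF2 k).mul_left _
  rw [multiLi_pair a b z, tsum_congr step, Summable.tsum_add S1 S2, tsum_mul_left,
    Summable.tsum_finsetSum (fun k _ => (SF1 k).mul_left _), Summable.tsum_finsetSum (fun k _ => (SF2 k).mul_left _)]
  congr 1
  · congr 1
    refine Finset.sum_congr rfl fun k hk => ?_
    rw [tsum_mul_left, tsum_swap_eq z k (a+b-k)]
  · refine Finset.sum_congr rfl fun k hk => ?_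
    rw [tsum_mul_left, tsum_prod_eq z hz k (a+b-k)]
    ring
end

section
/- For every positive integer q: sum_{p=0}^{q} (1 - 2^{1-2p}) * (1 - 2^{1-(2q-2p)}) * B_{2p} * B_{2q-2p} / ((2p)! * (2q-2p)!) = -(2q-1) * B_{2q} / (2q)!, where B_k are the Bernoulli numbers. -/
open PowerSeries Finset

noncomputable def Abq : ℚ⟦X⟧ := bernoulliPowerSeries ℚ

noncomputable def Fg : ℚ⟦X⟧ := Abq - C 2 * rescale (2⁻¹ : ℚ) Abq

lemma coeff_Ab (n : ℕ) : coeff n Abq = bernoulli n / n.factorial := by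
  simp [Abq, bernoulliPowerSeries, coeff_mk]

lemma rescale_X' (a : ℚ) : rescale a (X : ℚ⟦X⟧) = C a * X := by
  ext n
  simp [coeff_rescale, coeff_X]

lemma coeff_Fg (n : ℕ) :
    coeff n Fg = (1 - (2:ℚ) ^ (1 - (n:ℤ))) * bernoulli n / n.factorial := by
  have h2 : (2:ℚ) ^ (1 - (n:ℤ)) = 2 * ((2:ℚ)^n)⁻¹ := by
    rw [zpow_sub₀ (by norm_num : (2:ℚ) ≠ 0), zpow_one, zpow_natCast]; ring
  rw [h2]
  simp [Fg, coeff_rescale, coeff_Ab, inv_pow]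
  ring

lemma coeff_Fg_odd {n : ℕ} (h : Odd n) : coeff n Fg = 0 := by
  rcases eq_or_lt_of_le (Nat.succ_le_of_lt h.pos) with h1 | h1
  · rw [coeff_Fg, ← h1]; norm_num
  · rw [coeff_Fg, bernoulli_eq_bernoulli'_of_ne_one (by omega), bernoulli'_eq_zero_of_odd h h1]; simp

lemma Fg_sq : Fg * Fg = PowerSeries.mk (fun n => (1 - (n:ℚ)) * bernoulli n / n.factorial) := by
  set E := exp ℚ with hE
  set H := rescale (2⁻¹ : ℚ) E with hHdef
  have hH : H * H = E := by
    rw [hHdef, exp_mul_exp_eq_exp_add]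
    norm_num [rescale_one, hE]
  have hA : Abq * (E - 1) = X := bernoulliPowerSeries_mul_exp_sub_one ℚ
  have hRA : rescale (2⁻¹:ℚ) Abq * (H - 1) = C 2⁻¹ * X := by
    have h := congrArg (rescale (2⁻¹:ℚ)) hA
    rw [map_mul, map_sub, map_one, rescale_X'] at h
    exact h
  have h2 : (C (2:ℚ)) * (C (2⁻¹:ℚ)) = 1 := by rw [← map_mul]; norm_num
  have hfac : (H - 1) * (H + 1) = E - 1 := by linear_combination hH
  have hFE : Fg * (E - 1) = -(X * H) := by
    show (Abq - C 2 * rescale (2⁻¹:ℚ) Abq) * (E - 1) = -(X * H)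
    linear_combination hA + (C 2 * rescale (2⁻¹:ℚ) Abq) * hfac -
      (C 2 * (H+1)) * hRA - (X*(H+1)) * h2
  have hEne : E - 1 ≠ 0 := by
    intro h
    have h1 := congrArg (coeff 1) h
    rw [hE] at h1
    simp [coeff_exp] at h1
  have hdexp : d⁄dX ℚ E = E := by
    ext n
    rw [PowerSeries.coeff_derivative, coeff_exp, coeff_exp]
    simp [Nat.factorial_succ]
    field_simp
  have hA' : (d⁄dX ℚ Abq) * (E - 1) + Abq * E = 1 := by
    have h := congrArg (d⁄dX ℚ) hA
    rw [Derivation.leibniz, map_sub, hdexp, Derivation.map_one_eq_zero,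
      PowerSeries.derivative_X, smul_eq_mul, smul_eq_mul] at h
    linear_combination h
  have hGdef : (PowerSeries.mk fun n => (1 - (n:ℚ)) * bernoulli n / n.factorial)
      = Abq - X * (d⁄dX ℚ Abq) := by
    ext n
    cases n with
    | zero => simp [Abq, bernoulliPowerSeries, constantCoeff_mk]
    | succ m =>
        rw [coeff_mk, map_sub, coeff_succ_X_mul, PowerSeries.coeff_derivative,
          coeff_Ab]
        push_cast
        ring
  have hGE : (PowerSeries.mk fun n => (1 - (n:ℚ)) * bernoulli n / n.factorial)
      * ((E-1)*(E-1)) = X*X*E := by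
    rw [hGdef]
    linear_combination (-(X*(E-1)))*hA' + (E - 1 + X*E)*hA
  have hFF : (Fg*Fg)*((E-1)*(E-1)) = X*X*E := by
    linear_combination (Fg*(E-1) - X*H)*hFE + (X*X)*hH
  exact mul_right_cancel₀ (mul_ne_zero hEne hEne) (hFF.trans hGE.symm)

lemma sum_even_q (f : ℕ → ℚ) (h : ∀ k, Odd k → f k = 0) (q : ℕ) :
    ∑ k ∈ range (2*q+1), f k = ∑ p ∈ range (q+1), f (2*p) := by
  induction q with
  | zero => simp
  | succ n ih =>
      have h1 : 2*(n+1)+1 = (2*n+1) + 1 + 1 := by ring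
      rw [h1, Finset.sum_range_succ, Finset.sum_range_succ, ih,
        h (2*n+1) ⟨n, by ring⟩, add_zero]
      simp [Finset.sum_range_succ, mul_add, add_assoc]

theorem bernoulli_even_gosper (q : ℕ) (hq : 1 ≤ q) :
    ∑ p ∈ Finset.range (q + 1),
        (1 - (2 : ℚ) ^ (1 - (2 * p : ℤ))) * (1 - (2 : ℚ) ^ (1 - (2 * q - 2 * p : ℤ))) *
          bernoulli (2 * p) * bernoulli (2 * q - 2 * p) /
            (((2 * p).factorial : ℚ) * ((2 * q - 2 * p).factorial : ℚ)) =
      -(2 * q - 1 : ℚ) * bernoulli (2 * q) / ((2 * q).factorial : ℚ) := by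
  have key := congrArg (coeff (2*q)) Fg_sq
  rw [coeff_mul, coeff_mk, Finset.Nat.sum_antidiagonal_eq_sum_range_succ_mk] at key
  have key2 : ∑ k ∈ range (2*q+1), coeff k Fg * coeff (2*q-k) Fg
      = (1 - ((2*q:ℕ):ℚ)) * bernoulli (2*q) / ((2*q).factorial : ℚ) := key
  rw [sum_even_q (fun k => coeff k Fg * coeff (2*q-k) Fg)
    (fun k hk => by
      show coeff k Fg * coeff (2*q-k) Fg = 0
      rw [coeff_Fg_odd hk, zero_mul]) q] at key2
  calc ∑ p ∈ Finset.range (q + 1),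
        (1 - (2 : ℚ) ^ (1 - (2 * p : ℤ))) * (1 - (2 : ℚ) ^ (1 - (2 * q - 2 * p : ℤ))) *
          bernoulli (2 * p) * bernoulli (2 * q - 2 * p) /
            (((2 * p).factorial : ℚ) * ((2 * q - 2 * p).factorial : ℚ))
      = ∑ p ∈ range (q+1), coeff (2*p) Fg * coeff (2*q-2*p) Fg := by
        apply Finset.sum_congr rfl
        intro p hp
        have hpq : p ≤ q := Nat.lt_succ_iff.mp (mem_range.mp hp)
        rw [coeff_Fg, coeff_Fg]
        have hc : ((2*q - 2*p : ℕ) : ℤ) = 2*(q:ℤ) - 2*(p:ℤ) := by omega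
        rw [hc]
        push_cast
        ring
    _ = (1 - ((2*q : ℕ):ℚ)) * bernoulli (2*q) / ((2*q).factorial : ℚ) := key2
    _ = -(2 * q - 1 : ℚ) * bernoulli (2 * q) / ((2 * q).factorial : ℚ) := by
        push_cast
        ring
end

section
/- (Gosper's identity) For every integer r >= 2: sum_{p=0}^{r} (1 - 2^{1-p}) * (1 - 2^{1-(r-p)}) * B_p * B_{r-p} / (p! * (r-p)!) = -(r-1) * B_r / r!, where B_k are the Bernoulli numbers. -/
open PowerSeries

noncomputable def gosperB : PowerSeries ℚ := bernoulliPowerSeries ℚ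
noncomputable def gosperE : PowerSeries ℚ := PowerSeries.exp ℚ
noncomputable def gosperH : PowerSeries ℚ := PowerSeries.rescale (2⁻¹ : ℚ) gosperE
noncomputable def gosperF : PowerSeries ℚ :=
  gosperB - PowerSeries.C (R := ℚ) 2 * PowerSeries.rescale (2⁻¹ : ℚ) gosperB

lemma gosperH_sq : gosperH * gosperH = gosperE := by
  rw [gosperH, gosperE, PowerSeries.exp_mul_exp_eq_exp_add]
  norm_num [PowerSeries.rescale_one]

lemma gosperB_mul : gosperB * (gosperE - 1) = PowerSeries.X :=
  bernoulliPowerSeries_mul_exp_sub_one ℚ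

lemma gosperF_mul : gosperF * (gosperE - 1) = -(PowerSeries.X * gosperH) := by
  have h1 : PowerSeries.rescale (2⁻¹ : ℚ) gosperB * (gosperH - 1)
      = PowerSeries.C (R := ℚ) 2⁻¹ * PowerSeries.X := by
    have := congrArg (PowerSeries.rescale (2⁻¹ : ℚ)) gosperB_mul
    simpa [map_mul, map_sub, PowerSeries.rescale_X, gosperH] using this
  have hEH : gosperE - 1 = (gosperH - 1) * (gosperH + 1) := by
    ring_nf
    rw [← gosperH_sq]; ring
  calc gosperF * (gosperE - 1)
      = gosperB * (gosperE - 1)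
        - PowerSeries.C (R := ℚ) 2 * (PowerSeries.rescale (2⁻¹ : ℚ) gosperB * (gosperH - 1)) * (gosperH + 1) := by
        rw [gosperF, hEH]; ring
    _ = PowerSeries.X - PowerSeries.X * (gosperH + 1) := by
        rw [gosperB_mul, h1, ← mul_assoc, ← map_mul]
        norm_num
    _ = -(PowerSeries.X * gosperH) := by ring

lemma gosper_dE : PowerSeries.derivative ℚ gosperE = gosperE := by
  ext n
  rw [PowerSeries.coeff_derivative]
  simp only [gosperE, PowerSeries.coeff_exp]
  simp only [Algebra.algebraMap_self_apply, RingHom.id_apply]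
  field_simp [Nat.factorial_succ]
  push_cast [Nat.factorial_succ]; ring

noncomputable def gosperG : PowerSeries ℚ :=
  gosperB - PowerSeries.X * PowerSeries.derivative ℚ gosperB

lemma gosper_deriv_rel :
    PowerSeries.derivative ℚ gosperB * (gosperE - 1) + gosperB * gosperE = 1 := by
  have := congrArg (PowerSeries.derivative ℚ) gosperB_mul
  have hd : PowerSeries.derivative ℚ (gosperE - 1) = gosperE := by
    rw [map_sub, gosper_dE, Derivation.map_one_eq_zero, sub_zero]
  rw [Derivation.leibniz, hd, PowerSeries.derivative_X, smul_eq_mul, smul_eq_mul] at this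
  linear_combination this

lemma gosperG_mul : gosperG * (gosperE - 1) ^ 2 = PowerSeries.X ^ 2 * gosperE := by
  have h1 := gosperB_mul
  have h2 := gosper_deriv_rel
  rw [gosperG]
  linear_combination ((gosperE - 1) + PowerSeries.X * gosperE) * h1
    - PowerSeries.X * (gosperE - 1) * h2

lemma gosperE_sub_one_ne : gosperE - 1 ≠ (0 : PowerSeries ℚ) := by
  intro h
  have := congrArg (PowerSeries.coeff (R := ℚ) 1) h
  simp [gosperE, PowerSeries.coeff_exp, PowerSeries.coeff_one] at this

lemma gosperF_sq : gosperF * gosperF = gosperG := by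
  have h : gosperF * gosperF * (gosperE - 1) ^ 2 = gosperG * (gosperE - 1) ^ 2 := by
    rw [gosperG_mul]
    calc gosperF * gosperF * (gosperE - 1) ^ 2
        = (gosperF * (gosperE - 1)) * (gosperF * (gosperE - 1)) := by ring
      _ = PowerSeries.X ^ 2 * (gosperH * gosperH) := by rw [gosperF_mul]; ring
      _ = PowerSeries.X ^ 2 * gosperE := by rw [gosperH_sq]
  exact mul_right_cancel₀ (pow_ne_zero 2 gosperE_sub_one_ne) h

lemma gosperF_coeff (n : ℕ) :
    PowerSeries.coeff (R := ℚ) n gosperF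
      = (1 - (2 : ℚ) ^ (1 - (n : ℤ))) * bernoulli n / n.factorial := by
  simp only [gosperF, map_sub, PowerSeries.coeff_C_mul, PowerSeries.coeff_rescale,
    gosperB, bernoulliPowerSeries, PowerSeries.coeff_mk, Algebra.algebraMap_self_apply,
    RingHom.id_apply]
  have : (2 : ℚ) ^ (1 - (n : ℤ)) = 2 * (2⁻¹) ^ n := by
    rw [zpow_sub₀ (by norm_num : (2:ℚ) ≠ 0), zpow_one, zpow_natCast]
    field_simp
    rw [← mul_pow]; norm_num
  rw [this]; ring

lemma gosperG_coeff (n : ℕ) :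
    PowerSeries.coeff (R := ℚ) n gosperG = -((n : ℚ) - 1) * bernoulli n / n.factorial := by
  rw [gosperG, map_sub]
  cases n with
  | zero => simp [gosperB, bernoulliPowerSeries]
  | succ m =>
    rw [PowerSeries.coeff_succ_X_mul, PowerSeries.coeff_derivative]
    simp only [gosperB, bernoulliPowerSeries, PowerSeries.coeff_mk, Algebra.algebraMap_self_apply,
      RingHom.id_apply]
    have h : (((m+1).factorial : ℚ)) ≠ 0 := Nat.cast_ne_zero.mpr (Nat.factorial_ne_zero _)
    rw [Nat.factorial_succ] at h ⊢
    push_cast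
    field_simp
    ring

theorem bernoulli_gosper (r : ℕ) (hr : 2 ≤ r) :
    ∑ p ∈ Finset.range (r + 1),
        (1 - (2 : ℚ) ^ (1 - (p : ℤ))) * (1 - (2 : ℚ) ^ (1 - (r - p : ℤ))) *
          bernoulli p * bernoulli (r - p) /
            ((p.factorial : ℚ) * ((r - p).factorial : ℚ)) =
      -(r - 1 : ℚ) * bernoulli r / (r.factorial : ℚ) := by
  have key := congrArg (PowerSeries.coeff (R := ℚ) r) gosperF_sq
  rw [PowerSeries.coeff_mul, Finset.Nat.sum_antidiagonal_eq_sum_range_succ_mk,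
    gosperG_coeff] at key
  rw [← key]
  refine Finset.sum_congr rfl fun p hp => ?_
  have hpr : p ≤ r := Nat.lt_succ_iff.mp (Finset.mem_range.mp hp)
  rw [gosperF_coeff, gosperF_coeff, Nat.cast_sub hpr]
  ring
end

section
/- For every positive integer n: 2 * Le_{1,n}(-1) = sum_{k=1}^{n} zetabar(k) * zetabar(n-k+1) - n * zeta(n+1), where zetabar(k) = Li_k(-1) for k >= 2 and zetabar(1) = -ln 2, Le_{1,n}(-1) = sum_{n_1 >= n_2 >= 1} (-1)^{n_1}/(n_1 * n_2^n). -/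
open Filter

/-- `ζ̄(k) = ∑_{m ≥ 1} (-1)^m / m^k`; equal to `-log 2` for `k = 1`. -/
noncomputable def zetaBar (k : ℕ) : ℝ :=
  if k = 1 then -Real.log 2 else ∑' m : ℕ, (-1 : ℝ) ^ (m + 1) / (m + 1 : ℝ) ^ k

open Finset Topology

namespace AltAux

noncomputable def Hs (n m : ℕ) : ℝ := ∑ j ∈ Finset.Icc 1 m, 1 / (j : ℝ) ^ n

lemma Icc_one_eq_Ioc (m : ℕ) : Finset.Icc 1 m = Finset.Ioc 0 m := by
  ext x; simp; omega

lemma sum_Icc_one_eq_range (f : ℕ → ℝ) (N : ℕ) :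
    ∑ i ∈ Finset.Icc 1 N, f i = ∑ i ∈ Finset.range N, f (1 + i) := by
  rw [← Finset.Ico_add_one_right_eq_Icc, Finset.sum_Ico_eq_sum_range]
  simp

lemma alt_partial_bounds (g : ℕ → ℝ) (h0 : ∀ i, 0 ≤ g i) (h1 : ∀ i, g (i + 1) ≤ g i) :
    ∀ m a, 0 ≤ ∑ i ∈ Finset.range m, (-1 : ℝ) ^ i * g (a + i) ∧
      ∑ i ∈ Finset.range m, (-1 : ℝ) ^ i * g (a + i) ≤ g a := by
  intro m
  induction m with
  | zero => intro a; simpa using h0 a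
  | succ m ih =>
    intro a
    have key : ∑ i ∈ Finset.range (m + 1), (-1 : ℝ) ^ i * g (a + i)
        = g a - ∑ i ∈ Finset.range m, (-1 : ℝ) ^ i * g ((a + 1) + i) := by
      rw [Finset.sum_range_succ']
      have h2 : ∀ i, (-1 : ℝ) ^ (i + 1) * g (a + (i + 1)) = -((-1 : ℝ) ^ i * g ((a + 1) + i)) := by
        intro i
        have e : a + (i + 1) = (a + 1) + i := by omega
        rw [e, pow_succ]
        ring
      rw [Finset.sum_congr rfl fun i _ => h2 i, Finset.sum_neg_distrib]
      simp
      ring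
    rw [key]
    obtain ⟨ih1, ih2⟩ := ih (a + 1)
    constructor
    · linarith [h1 a]
    · linarith [h0 (a + 1)]

lemma alt_tail_bound (a b : ℕ) (ha : 1 ≤ a) :
    |∑ c ∈ Finset.Icc a b, (-1 : ℝ) ^ c / c| ≤ 1 / a := by
  rcases le_or_gt a b with hab | hab
  · set g : ℕ → ℝ := fun i => 1 / ((a + i : ℕ) : ℝ) with hg
    have h0 : ∀ i, 0 ≤ g i := by
      intro i; simp only [hg]; positivity
    have h1 : ∀ i, g (i + 1) ≤ g i := by
      intro i
      simp only [hg]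
      apply one_div_le_one_div_of_le
      · exact_mod_cast Nat.lt_of_lt_of_le Nat.zero_lt_one (by omega)
      · exact_mod_cast (by omega : a + i ≤ a + (i + 1))
    have conv : ∑ c ∈ Finset.Icc a b, (-1 : ℝ) ^ c / c
        = (-1 : ℝ) ^ a * ∑ i ∈ Finset.range (b + 1 - a), (-1 : ℝ) ^ i * g (0 + i) := by
      rw [← Finset.Ico_add_one_right_eq_Icc, Finset.sum_Ico_eq_sum_range, Finset.mul_sum]
      refine Finset.sum_congr rfl fun i _ => ?_
      simp only [hg, pow_add, Nat.zero_add]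
      ring
    rw [conv, abs_mul, abs_pow, abs_neg, abs_one, one_pow, one_mul]
    have hb := alt_partial_bounds g h0 h1 (b + 1 - a) 0
    have hg0 : g 0 = 1 / a := by simp [hg]
    rw [abs_le]
    constructor
    · have : (0:ℝ) ≤ 1 / a := by positivity
      linarith [hb.1]
    · rw [← hg0]; exact hb.2
  · rw [Finset.Icc_eq_empty (by omega)]
    simp

lemma Hs_sub (n : ℕ) {M N : ℕ} (h : M ≤ N) :
    Hs n N - Hs n M = ∑ j ∈ Finset.Ioc M N, 1 / (j : ℝ) ^ n := by
  have := Finset.sum_Ioc_consecutive (fun j => 1 / (j : ℝ) ^ n) (Nat.zero_le M) h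
  unfold Hs
  rw [Icc_one_eq_Ioc, Icc_one_eq_Ioc]
  linarith

lemma shift_sum (n c M : ℕ) :
    ∑ b ∈ Finset.Icc 1 M, 1 / (((b + c : ℕ)) : ℝ) ^ n
      = ∑ j ∈ Finset.Ioc c (M + c), 1 / (j : ℝ) ^ n := by
  refine Finset.sum_nbij' (fun b => b + c) (fun j => j - c) ?_ ?_ ?_ ?_ ?_
  · intro x hx; simp only [Finset.mem_Icc] at hx; simp only [Finset.mem_Ioc]; omega
  · intro x hx; simp only [Finset.mem_Ioc] at hx; simp only [Finset.mem_Icc]; omega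
  · intro x hx; simp only [Finset.mem_Icc] at hx; show x + c - c = x; omega
  · intro x hx; simp only [Finset.mem_Ioc] at hx; show x - c + c = x; omega
  · intro x hx; rfl


noncomputable def Pv (k N : ℕ) : ℝ := ∑ m ∈ Finset.Icc 1 N, (-1:ℝ)^m / (m:ℝ)^k
noncomputable def Av (n N : ℕ) : ℝ := ∑ c ∈ Finset.Icc 1 N, (-1:ℝ)^c/(c:ℝ) * Hs n c
noncomputable def Ev (n N : ℕ) : ℝ :=
  ∑ c ∈ Finset.Icc 1 N, (-1:ℝ)^c/(c:ℝ) * (Hs n N - Hs n (N-c))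
noncomputable def Zv (n N : ℕ) : ℝ := ∑ m ∈ Finset.Icc 1 N, 1/(m:ℝ)^(n+1)
noncomputable def wf (n a b : ℕ) : ℝ :=
  (-1:ℝ)^(a+b) * ((1/(a:ℝ)^n - 1/(b:ℝ)^n)/((b:ℝ)-(a:ℝ)))
noncomputable def ff (n a b : ℕ) : ℝ :=
  (-1:ℝ)^(a+b) * ∑ k ∈ Finset.Icc 1 n, 1/((a:ℝ)^k*(b:ℝ)^(n-k+1))

lemma kernel_diag (n : ℕ) (a : ℕ) :
    ∑ k ∈ Finset.Icc 1 n, 1 / ((a : ℝ) ^ k * (a : ℝ) ^ (n - k + 1))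
      = n * (1 / (a : ℝ) ^ (n + 1)) := by
  have h : ∀ k ∈ Finset.Icc 1 n, 1 / ((a : ℝ) ^ k * (a : ℝ) ^ (n - k + 1))
      = 1 / (a : ℝ) ^ (n + 1) := by
    intro k hk
    simp only [Finset.mem_Icc] at hk
    rw [← pow_add]
    congr 2
    omega
  rw [Finset.sum_congr rfl h, Finset.sum_const, Nat.card_Icc]
  simp [nsmul_eq_mul]

lemma kernel_off (n : ℕ) (a b : ℕ) (ha : 1 ≤ a) (hb : 1 ≤ b) (hab : a ≠ b) :
    ∑ k ∈ Finset.Icc 1 n, 1 / ((a : ℝ) ^ k * (b : ℝ) ^ (n - k + 1))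
      = (1 / (a : ℝ) ^ n - 1 / (b : ℝ) ^ n) / ((b : ℝ) - (a : ℝ)) := by
  have hA : (a : ℝ) ≠ 0 := by
    have : (0:ℝ) < a := by exact_mod_cast (by omega : 0 < a)
    exact ne_of_gt this
  have hB : (b : ℝ) ≠ 0 := by
    have : (0:ℝ) < b := by exact_mod_cast (by omega : 0 < b)
    exact ne_of_gt this
  have hne : (b : ℝ) ≠ (a : ℝ) := by exact_mod_cast hab.symm
  rw [eq_div_iff (sub_ne_zero.mpr hne), Finset.sum_mul,
    sum_Icc_one_eq_range (fun k => 1 / ((a : ℝ) ^ k * (b : ℝ) ^ (n - k + 1)) * ((b : ℝ) - (a : ℝ)))]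
  have key : ∀ i ∈ Finset.range n,
      1 / ((a:ℝ)^(1+i) * (b:ℝ)^(n-(1+i)+1)) * ((b:ℝ) - (a:ℝ))
        = (fun i => 1/((a:ℝ)^i * (b:ℝ)^(n-i))) (i+1) - (fun i => 1/((a:ℝ)^i * (b:ℝ)^(n-i))) i := by
    intro i hi
    simp only [Finset.mem_range] at hi
    obtain ⟨j, hj⟩ : ∃ j, n - i = j + 1 := ⟨n - i - 1, by omega⟩
    have e1 : n - (1+i) + 1 = j + 1 := by omega
    have e2 : n - (i+1) = j := by omega
    simp only [e1, e2, hj]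
    field_simp
    ring
  rw [Finset.sum_congr rfl key,
    Finset.sum_range_sub (fun i => 1/((a:ℝ)^i * (b:ℝ)^(n-i)))]
  simp
lemma key (n N : ℕ) :
    ∑ k ∈ Finset.Icc 1 n, Pv k N * Pv (n - k + 1) N
      = n * Zv n N + 2 * (Av n N - Ev n N) := by
  classical
  have step1 : ∑ k ∈ Finset.Icc 1 n, Pv k N * Pv (n - k + 1) N
      = ∑ p ∈ Finset.Icc 1 N ×ˢ Finset.Icc 1 N, ff n p.1 p.2 := by
    unfold Pv
    have e1 : ∀ k ∈ Finset.Icc 1 n,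
        (∑ m ∈ Finset.Icc 1 N, (-1:ℝ)^m / (m:ℝ)^k) *
          (∑ m ∈ Finset.Icc 1 N, (-1:ℝ)^m / (m:ℝ)^(n-k+1))
        = ∑ a ∈ Finset.Icc 1 N, ∑ b ∈ Finset.Icc 1 N,
            ((-1:ℝ)^a/(a:ℝ)^k) * ((-1:ℝ)^b/(b:ℝ)^(n-k+1)) :=
      fun k _ => Finset.sum_mul_sum _ _ _ _
    rw [Finset.sum_congr rfl e1, Finset.sum_comm, Finset.sum_product']
    refine Finset.sum_congr rfl fun a _ => ?_
    rw [Finset.sum_comm]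
    refine Finset.sum_congr rfl fun b _ => ?_
    unfold ff
    rw [Finset.mul_sum]
    refine Finset.sum_congr rfl fun k _ => ?_
    rw [pow_add]
    ring
  have diag : ∑ p ∈ (Finset.Icc 1 N ×ˢ Finset.Icc 1 N).filter (fun p => p.1 = p.2),
      ff n p.1 p.2 = n * Zv n N := by
    rw [Finset.sum_nbij' (i := fun p : ℕ × ℕ => p.1) (j := fun a => (a, a))
      (t := Finset.Icc 1 N) (g := fun a => ff n a a)
      (fun p hp => by simp only [Finset.mem_filter, Finset.mem_product] at hp; exact hp.1.1)
      (fun a ha => by simp only [Finset.mem_filter, Finset.mem_product]; exact ⟨⟨ha, ha⟩, trivial⟩)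
      (fun p hp => by
        simp only [Finset.mem_filter, Finset.mem_product] at hp
        rw [Prod.ext_iff]; exact ⟨rfl, hp.2⟩)
      (fun a ha => rfl)
      (fun p hp => by
        simp only [Finset.mem_filter, Finset.mem_product] at hp
        show ff n p.1 p.2 = ff n p.1 p.1
        rw [hp.2])]
    unfold ff Zv
    rw [Finset.mul_sum]
    refine Finset.sum_congr rfl fun a _ => ?_
    rw [kernel_diag n a, ← two_mul, pow_mul, neg_one_sq, one_pow, one_mul]
  have wsymm : ∀ a b : ℕ, wf n a b = wf n b a := by
    intro a b
    unfold wf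
    rw [add_comm b a]
    congr 1
    rw [← neg_sub (1/(a:ℝ)^n), ← neg_sub ((b:ℝ)), neg_div_neg_eq]
  have offdiag : ∑ p ∈ (Finset.Icc 1 N ×ˢ Finset.Icc 1 N).filter (fun p => ¬ p.1 = p.2),
      ff n p.1 p.2 = 2 * (Av n N - Ev n N) := by
    have hfw : ∀ p ∈ (Finset.Icc 1 N ×ˢ Finset.Icc 1 N).filter (fun p => ¬ p.1 = p.2),
        ff n p.1 p.2 = wf n p.1 p.2 := by
      intro p hp
      simp only [Finset.mem_filter, Finset.mem_product, Finset.mem_Icc] at hp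
      unfold ff wf
      rw [kernel_off n p.1 p.2 hp.1.1.1 hp.1.2.1 hp.2]
    rw [Finset.sum_congr rfl hfw,
      ← Finset.sum_filter_add_sum_filter_not
        ((Finset.Icc 1 N ×ˢ Finset.Icc 1 N).filter (fun p => ¬ p.1 = p.2))
        (fun p => p.2 < p.1)]
    have swapeq : ∑ p ∈ (((Finset.Icc 1 N ×ˢ Finset.Icc 1 N).filter
          (fun p => ¬ p.1 = p.2)).filter (fun p => ¬ p.2 < p.1)), wf n p.1 p.2
        = ∑ p ∈ (((Finset.Icc 1 N ×ˢ Finset.Icc 1 N).filter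
          (fun p => ¬ p.1 = p.2)).filter (fun p => p.2 < p.1)), wf n p.1 p.2 := by
      refine Finset.sum_nbij' (fun p => (p.2, p.1)) (fun p => (p.2, p.1)) ?_ ?_ ?_ ?_ ?_
      · intro p hp
        simp only [Finset.mem_filter, Finset.mem_product, Finset.mem_Icc] at *
        omega
      · intro p hp
        simp only [Finset.mem_filter, Finset.mem_product, Finset.mem_Icc] at *
        omega
      · intro p _; rfl
      · intro p _; rfl
      · intro p _; exact wsymm p.1 p.2
    rw [swapeq]
    have hfe : ((Finset.Icc 1 N ×ˢ Finset.Icc 1 N).filter (fun p => ¬ p.1 = p.2)).filter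
          (fun p => p.2 < p.1)
        = (Finset.Icc 1 N ×ˢ Finset.Icc 1 N).filter (fun p => p.2 < p.1) := by
      rw [Finset.filter_filter]
      apply Finset.filter_congr
      intro p hp
      constructor
      · intro h; exact h.2
      · intro h; exact ⟨by omega, h⟩
    rw [hfe]
    have lowC : ∑ p ∈ (Finset.Icc 1 N ×ˢ Finset.Icc 1 N).filter (fun p => p.2 < p.1),
          wf n p.1 p.2
        = ∑ q ∈ (Finset.Icc 1 N ×ˢ Finset.Icc 1 N).filter (fun q => q.1 + q.2 ≤ N),
          wf n (q.2 + q.1) q.2 := by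
      refine Finset.sum_nbij' (fun p => (p.1 - p.2, p.2)) (fun q => (q.2 + q.1, q.2)) ?_ ?_ ?_ ?_ ?_
      · intro p hp
        simp only [Finset.mem_filter, Finset.mem_product, Finset.mem_Icc] at *
        omega
      · intro q hq
        simp only [Finset.mem_filter, Finset.mem_product, Finset.mem_Icc] at *
        omega
      · intro p hp
        simp only [Finset.mem_filter, Finset.mem_product, Finset.mem_Icc] at hp
        rw [Prod.ext_iff]
        refine ⟨by show p.2 + (p.1 - p.2) = p.1; omega, rfl⟩
      · intro q hq
        simp only [Finset.mem_filter, Finset.mem_product, Finset.mem_Icc] at hq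
        rw [Prod.ext_iff]
        refine ⟨by show q.2 + q.1 - q.2 = q.1; omega, rfl⟩
      · intro p hp
        simp only [Finset.mem_filter, Finset.mem_product, Finset.mem_Icc] at hp
        show wf n p.1 p.2 = wf n (p.2 + (p.1 - p.2)) p.2
        rw [show p.2 + (p.1 - p.2) = p.1 by omega]
    rw [lowC]
    have Cnest : ∑ q ∈ (Finset.Icc 1 N ×ˢ Finset.Icc 1 N).filter (fun q => q.1 + q.2 ≤ N),
          wf n (q.2 + q.1) q.2
        = ∑ c ∈ Finset.Icc 1 N, ∑ b ∈ Finset.Icc 1 (N - c), wf n (b + c) b := by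
      rw [Finset.sum_filter, Finset.sum_product' (f := fun c b => if c + b ≤ N then wf n (b + c) b else 0)]
      refine Finset.sum_congr rfl fun c hc => ?_
      rw [← Finset.sum_filter]
      have : (Finset.Icc 1 N).filter (fun b => c + b ≤ N) = Finset.Icc 1 (N - c) := by
        ext x; simp only [Finset.mem_filter, Finset.mem_Icc]; omega
      rw [this]
    rw [Cnest]
    have inner : ∀ c ∈ Finset.Icc 1 N, ∑ b ∈ Finset.Icc 1 (N - c), wf n (b + c) b
        = (-1:ℝ)^c/(c:ℝ) * Hs n c - (-1:ℝ)^c/(c:ℝ) * (Hs n N - Hs n (N - c)) := by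
      intro c hc
      simp only [Finset.mem_Icc] at hc
      have pointw : ∀ b ∈ Finset.Icc 1 (N - c), wf n (b + c) b
          = (-1:ℝ)^c/(c:ℝ) * (1/(b:ℝ)^n) - (-1:ℝ)^c/(c:ℝ) * (1/(((b+c:ℕ)):ℝ)^n) := by
        intro b hb
        unfold wf
        rw [show (b + c) + b = 2*b + c by ring, pow_add, pow_mul, neg_one_sq, one_pow, one_mul]
        push_cast
        rw [show (b:ℝ) - ((b:ℝ)+(c:ℝ)) = -(c:ℝ) by ring, div_neg]
        ring
      rw [Finset.sum_congr rfl pointw, Finset.sum_sub_distrib, ← Finset.mul_sum, ← Finset.mul_sum,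
        shift_sum n c (N - c), show N - c + c = N by omega,
        show ∑ j ∈ Finset.Ioc c N, 1/(j:ℝ)^n = Hs n N - Hs n c from (Hs_sub n (by omega)).symm]
      show (-1:ℝ)^c/(c:ℝ) * Hs n (N - c) - (-1:ℝ)^c/(c:ℝ) * (Hs n N - Hs n c) = _
      ring
    rw [Finset.sum_congr rfl inner, Finset.sum_sub_distrib]
    unfold Av Ev
    ring
  rw [step1, ← Finset.sum_filter_add_sum_filter_not
    (Finset.Icc 1 N ×ˢ Finset.Icc 1 N) (fun p => p.1 = p.2), diag, offdiag]

lemma tendsto_Pv_one : Tendsto (fun N => Pv 1 N) atTop (𝓝 (-Real.log 2)) := by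
  have anti : Antitone (fun i : ℕ => 1 / ((i:ℝ) + 1)) := by
    apply antitone_nat_of_succ_le
    intro m
    apply one_div_le_one_div_of_le (by positivity)
    push_cast
    linarith
  obtain ⟨l, hl⟩ := anti.tendsto_alternating_series_of_tendsto_zero
      tendsto_one_div_add_atTop_nhds_zero_nat
  have m : 𝓝[<] (1:ℝ) ≤ 𝓝 1 := nhdsWithin_le_nhds
  have abel := Real.tendsto_tsum_powerSeries_nhdsWithin_lt hl
  have habel2 := abel.mul (tendsto_id.mono_left m)
  have heq : ∀ᶠ x in 𝓝[<] (1:ℝ),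
      (∑' i : ℕ, ((-1:ℝ)^i * (1/((i:ℝ)+1))) * x ^ i) * x = Real.log (1 + x) := by
    have hIoo : Set.Ioo (0:ℝ) 1 ∈ 𝓝[<] (1:ℝ) :=
      Ioo_mem_nhdsLT_of_mem (by norm_num : (1:ℝ) ∈ Set.Ioc (0:ℝ) 1)
    filter_upwards [hIoo] with x hx
    have hx1 : |(-x)| < 1 := by
      rw [abs_neg, abs_of_pos hx.1]; exact hx.2
    have hs := (Real.hasSum_pow_div_log_of_abs_lt_one hx1).neg
    have hfun : (fun i : ℕ => -((-x) ^ (i+1) / ((i:ℝ)+1)))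
        = fun i : ℕ => ((-1:ℝ)^i * (1/((i:ℝ)+1))) * x ^ i * x := by
      funext i
      rw [neg_pow, pow_succ]
      ring
    rw [hfun] at hs
    rw [← tsum_mul_right]
    rw [hs.tsum_eq]
    rw [show (1:ℝ) - (-x) = 1 + x by ring, neg_neg]
  have habel3 : Tendsto (fun x : ℝ => Real.log (1 + x)) (𝓝[<] (1:ℝ)) (𝓝 (l * 1)) :=
    habel2.congr' heq
  have hcont : Tendsto (fun x : ℝ => Real.log (1 + x)) (𝓝[<] (1:ℝ)) (𝓝 (Real.log 2)) := by
    have : ContinuousAt (fun x : ℝ => Real.log (1 + x)) 1 :=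
      (Real.continuousAt_log (by norm_num)).comp (continuousAt_const.add continuousAt_id)
    have h2 := this.tendsto
    rw [show (1:ℝ) + 1 = 2 by norm_num] at h2
    exact h2.mono_left m
  have hl2 : l = Real.log 2 := by
    have := tendsto_nhds_unique habel3 hcont
    linarith [this]
  have := hl.neg
  rw [hl2] at this
  apply this.congr
  intro N
  rw [← Finset.sum_neg_distrib]
  unfold Pv
  rw [sum_Icc_one_eq_range (fun m => (-1:ℝ)^m / (m:ℝ)^1) N]
  refine Finset.sum_congr rfl fun i _ => ?_
  push_cast
  rw [pow_add]
  ring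

lemma summable_shift (k : ℕ) (hk : 2 ≤ k) : Summable (fun m : ℕ => 1/((m:ℝ)+1)^k) := by
  have h := (summable_nat_add_iff 1).mpr
    ((Real.summable_one_div_nat_pow (p := k)).mpr (by omega))
  refine h.congr fun m => ?_
  push_cast
  ring

lemma tendsto_Pv (k : ℕ) (hk : 1 ≤ k) :
    Tendsto (fun N => Pv k N) atTop (𝓝 (zetaBar k)) := by
  rcases eq_or_lt_of_le hk with h1 | h2
  · rw [show zetaBar k = -Real.log 2 by rw [zetaBar, if_pos h1.symm], ← h1]
    exact tendsto_Pv_one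
  · have hk2 : 2 ≤ k := h2
    have hsum : Summable (fun m : ℕ => (-1:ℝ)^(m+1)/((m:ℝ)+1)^k) := by
      apply Summable.of_norm
      refine (summable_shift k hk2).congr fun m => ?_
      rw [norm_div, norm_pow, norm_neg, norm_one, one_pow, norm_pow]
      rw [Real.norm_eq_abs, abs_of_nonneg (by positivity)]
    have ht := hsum.hasSum.tendsto_sum_nat
    rw [show zetaBar k = ∑' m : ℕ, (-1 : ℝ) ^ (m + 1) / (m + 1 : ℝ) ^ k by rw [zetaBar, if_neg (by omega)]]
    apply ht.congr
    intro N
    unfold Pv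
    rw [sum_Icc_one_eq_range (fun m => (-1:ℝ)^m / (m:ℝ)^k) N]
    refine Finset.sum_congr rfl fun i _ => ?_
    push_cast
    rw [add_comm 1 (i:ℝ), add_comm 1 i]
  -- note: goal orientation
lemma tendsto_Zv (n : ℕ) (hn : 1 ≤ n) :
    Tendsto (fun N => Zv n N) atTop (𝓝 (∑' m : ℕ, 1 / ((m:ℝ) + 1) ^ (n+1))) := by
  have hsum := summable_shift (n+1) (by omega)
  have ht := hsum.hasSum.tendsto_sum_nat
  apply ht.congr
  intro N
  unfold Zv
  rw [sum_Icc_one_eq_range (fun m => 1/(m:ℝ)^(n+1)) N]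
  refine Finset.sum_congr rfl fun i _ => ?_
  push_cast
  rw [add_comm 1 (i:ℝ)]

lemma tendsto_Ev (n : ℕ) (hn : 1 ≤ n) : Tendsto (fun N => Ev n N) atTop (𝓝 0) := by
  have cesaro := (tendsto_one_div_add_atTop_nhds_zero_nat).cesaro
  have hg : Tendsto (fun N : ℕ => 2 * ((N:ℝ)⁻¹ * ∑ i ∈ Finset.range N, 1/((i:ℝ)+1)))
      atTop (𝓝 0) := by
    simpa using cesaro.const_mul 2
  apply squeeze_zero_norm' _ hg
  filter_upwards [eventually_ge_atTop 1] with N hN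
  have swap : Ev n N = ∑ j ∈ Finset.Icc 1 N,
      (1/(j:ℝ)^n) * ∑ c ∈ Finset.Ioc (N-j) N, (-1:ℝ)^c/(c:ℝ) := by
    unfold Ev
    have e1 : ∀ c ∈ Finset.Icc 1 N, (-1:ℝ)^c/(c:ℝ) * (Hs n N - Hs n (N-c))
        = ∑ j ∈ Finset.Ioc (N-c) N, ((-1:ℝ)^c/(c:ℝ)) * (1/(j:ℝ)^n) := by
      intro c hc
      rw [Hs_sub n (by omega), Finset.mul_sum]
    rw [Finset.sum_congr rfl e1,
      Finset.sum_comm' (s := Finset.Icc 1 N) (t := fun c => Finset.Ioc (N-c) N)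
        (t' := Finset.Icc 1 N) (s' := fun j => Finset.Ioc (N-j) N) (by
          intro c j
          simp only [Finset.mem_Icc, Finset.mem_Ioc]
          omega)]
    refine Finset.sum_congr rfl fun j hj => ?_
    rw [← Finset.sum_mul, mul_comm]
  rw [swap, Real.norm_eq_abs]
  have step1 : |∑ j ∈ Finset.Icc 1 N, (1/(j:ℝ)^n) * ∑ c ∈ Finset.Ioc (N-j) N, (-1:ℝ)^c/(c:ℝ)|
      ≤ ∑ j ∈ Finset.Icc 1 N, |(1/(j:ℝ)^n) * ∑ c ∈ Finset.Ioc (N-j) N, (-1:ℝ)^c/(c:ℝ)| :=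
    Finset.abs_sum_le_sum_abs _ _
  have step2 : ∑ j ∈ Finset.Icc 1 N, |(1/(j:ℝ)^n) * ∑ c ∈ Finset.Ioc (N-j) N, (-1:ℝ)^c/(c:ℝ)|
      ≤ ∑ j ∈ Finset.Icc 1 N, (1/(j:ℝ)) * (1/(((N-j+1:ℕ)):ℝ)) := by
    apply Finset.sum_le_sum
    intro j hj
    simp only [Finset.mem_Icc] at hj
    rw [abs_mul, abs_of_nonneg (show (0:ℝ) ≤ 1/(j:ℝ)^n by positivity)]
    have hjpos : (0:ℝ) < (j:ℝ) := by exact_mod_cast (by omega : 0 < j)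
    have h2 : 1/(j:ℝ)^n ≤ 1/(j:ℝ) := by
      apply one_div_le_one_div_of_le hjpos
      calc (j:ℝ) = (j:ℝ)^1 := (pow_one _).symm
        _ ≤ (j:ℝ)^n := pow_le_pow_right₀ (by exact_mod_cast hj.1) hn
    have h3 : |∑ c ∈ Finset.Ioc (N-j) N, (-1:ℝ)^c/(c:ℝ)| ≤ 1/(((N-j+1:ℕ)):ℝ) := by
      rw [show Finset.Ioc (N-j) N = Finset.Icc (N-j+1) N from (Finset.Icc_add_one_left_eq_Ioc _ _).symm]
      exact alt_tail_bound (N-j+1) N (by omega)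
    have h4 : (0:ℝ) ≤ 1/(((N-j+1:ℕ)):ℝ) := by positivity
    calc (1/(j:ℝ)^n) * |∑ c ∈ Finset.Ioc (N-j) N, (-1:ℝ)^c/(c:ℝ)|
        ≤ (1/(j:ℝ)^n) * (1/(((N-j+1:ℕ)):ℝ)) :=
          mul_le_mul_of_nonneg_left h3 (by positivity)
      _ ≤ (1/(j:ℝ)) * (1/(((N-j+1:ℕ)):ℝ)) := mul_le_mul_of_nonneg_right h2 h4
  have step3 : ∑ j ∈ Finset.Icc 1 N, (1/(j:ℝ)) * (1/(((N-j+1:ℕ)):ℝ))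
      = (1/((N:ℝ)+1)) * ∑ j ∈ Finset.Icc 1 N, ((1/(j:ℝ)) + 1/(((N-j+1:ℕ)):ℝ)) := by
    rw [Finset.mul_sum]
    refine Finset.sum_congr rfl fun j hj => ?_
    simp only [Finset.mem_Icc] at hj
    have hxy : (j:ℝ) + ((N-j+1:ℕ):ℝ) = (N:ℝ)+1 := by
      have h : j + (N-j+1) = N+1 := by omega
      exact_mod_cast h
    have hx : (0:ℝ) < (j:ℝ) := by exact_mod_cast (by omega : 0 < j)
    have hy : (0:ℝ) < ((N-j+1:ℕ):ℝ) := by exact_mod_cast (by omega : 0 < N-j+1)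
    rw [← hxy]
    field_simp
    ring
  have refl : ∑ j ∈ Finset.Icc 1 N, 1/(((N-j+1:ℕ)):ℝ) = ∑ j ∈ Finset.Icc 1 N, 1/(j:ℝ) := by
    refine Finset.sum_nbij' (fun j => N-j+1) (fun j => N-j+1) ?_ ?_ ?_ ?_ ?_
    · intro j hj; simp only [Finset.mem_Icc] at *; omega
    · intro j hj; simp only [Finset.mem_Icc] at *; omega
    · intro j hj; simp only [Finset.mem_Icc] at hj; show N-(N-j+1)+1 = j; omega
    · intro j hj; simp only [Finset.mem_Icc] at hj; show N-(N-j+1)+1 = j; omega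
    · intro j hj; rfl
  have hIcc : ∑ j ∈ Finset.Icc 1 N, 1/(j:ℝ) = ∑ i ∈ Finset.range N, 1/((i:ℝ)+1) := by
    rw [sum_Icc_one_eq_range (fun j => 1/(j:ℝ)) N]
    refine Finset.sum_congr rfl fun i _ => ?_
    push_cast; rw [add_comm]
  have step4 : (1/((N:ℝ)+1)) * ∑ j ∈ Finset.Icc 1 N, ((1/(j:ℝ)) + 1/(((N-j+1:ℕ)):ℝ))
      ≤ 2 * ((N:ℝ)⁻¹ * ∑ i ∈ Finset.range N, 1/((i:ℝ)+1)) := by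
    rw [Finset.sum_add_distrib, refl, hIcc]
    have hH : (0:ℝ) ≤ ∑ i ∈ Finset.range N, 1/((i:ℝ)+1) :=
      Finset.sum_nonneg fun i _ => by positivity
    have hNpos : (0:ℝ) < (N:ℝ) := by exact_mod_cast (by omega : 0 < N)
    have h5 : 1/((N:ℝ)+1) ≤ (N:ℝ)⁻¹ := by
      rw [one_div]
      apply inv_anti₀ hNpos
      linarith
    calc (1/((N:ℝ)+1)) * (∑ i ∈ Finset.range N, 1/((i:ℝ)+1) + ∑ i ∈ Finset.range N, 1/((i:ℝ)+1))
        = 2 * ((1/((N:ℝ)+1)) * ∑ i ∈ Finset.range N, 1/((i:ℝ)+1)) := by ring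
      _ ≤ 2 * ((N:ℝ)⁻¹ * ∑ i ∈ Finset.range N, 1/((i:ℝ)+1)) :=
          mul_le_mul_of_nonneg_left (mul_le_mul_of_nonneg_right h5 hH) (by norm_num)
  linarith [step3 ▸ (step1.trans step2)]

end AltAux

theorem two_mul_Le_one_n_neg_one (n : ℕ) (hn : 1 ≤ n) :
    Tendsto
      (fun N : ℕ => 2 * ∑ n1 ∈ Finset.Icc 1 N,
        ((-1 : ℝ) ^ n1 / n1) * ∑ n2 ∈ Finset.Icc 1 n1, 1 / (n2 : ℝ) ^ n)
      atTop
      (nhds (∑ k ∈ Finset.Icc 1 n, zetaBar k * zetaBar (n - k + 1)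
        - n * ∑' m : ℕ, 1 / (m + 1 : ℝ) ^ (n + 1))) := by
  classical
  have hF : Tendsto (fun N => ∑ k ∈ Finset.Icc 1 n, AltAux.Pv k N * AltAux.Pv (n-k+1) N) atTop
      (𝓝 (∑ k ∈ Finset.Icc 1 n, zetaBar k * zetaBar (n-k+1))) := by
    apply tendsto_finset_sum
    intro k hk
    simp only [Finset.mem_Icc] at hk
    exact (AltAux.tendsto_Pv k hk.1).mul (AltAux.tendsto_Pv (n-k+1) (by omega))
  have hZ := (AltAux.tendsto_Zv n hn).const_mul (n:ℝ)
  have hE := (AltAux.tendsto_Ev n hn).const_mul (2:ℝ)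
  have comb := (hF.sub hZ).add hE
  rw [mul_zero, add_zero] at comb
  refine comb.congr fun N => ?_
  have hkey := AltAux.key n N
  show (∑ k ∈ Finset.Icc 1 n, AltAux.Pv k N * AltAux.Pv (n-k+1) N)
      - (n:ℝ) * AltAux.Zv n N + 2 * AltAux.Ev n N = 2 * AltAux.Av n N
  linarith [hkey]
end

section
/- Le_{2,1}(1/2) = zeta(3) - (1/2)*zeta(2)*ln 2, i.e., sum over n_1 >= n_2 >= 1 of (1/2)^{n_1}/(n_1^2 * n_2) equals zeta(3) - (pi^2/12)*ln 2. -/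
open MeasureTheory Set Finset

noncomputable def Hh (n : ℕ) : ℝ := ∑ i ∈ Finset.range n, (1:ℝ)/(i+1)

lemma Hh_nonneg (n : ℕ) : 0 ≤ Hh n := Finset.sum_nonneg fun i _ => by positivity

lemma Hh_le (n : ℕ) : Hh n ≤ n := by
  calc Hh n ≤ ∑ i ∈ Finset.range n, (1:ℝ) := by
        apply Finset.sum_le_sum
        intro i _
        rw [div_le_one (by positivity)]
        exact le_add_of_nonneg_left (by positivity)
    _ = n := by simp

lemma Hh_succ (n : ℕ) : Hh (n+1) = Hh n + 1/(n+1) := Finset.sum_range_succ _ n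

lemma hL : HasSum (fun n : ℕ => (1/2:ℝ)^(n+1)/(n+1)) (Real.log 2) := by
  have h := Real.hasSum_pow_div_log_of_abs_lt_one (x := 1/2) (by rw [abs_of_pos] <;> norm_num)
  have : -Real.log (1 - 1/2) = Real.log 2 := by
    norm_num
    rw [← Real.log_inv]; norm_num
  rwa [this] at h

lemma Sa : Summable (fun n : ℕ => (1/2:ℝ)^(n+1)/((n:ℝ)+1)^2) := by
  apply Summable.of_nonneg_of_le (fun n => by positivity) (fun n => ?_)
    (summable_geometric_of_lt_one (by norm_num) (by norm_num : (1/2:ℝ) < 1))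
  calc (1/2:ℝ)^(n+1)/((n:ℝ)+1)^2 ≤ (1/2:ℝ)^(n+1)/1 := by
        apply div_le_div_of_nonneg_left (by positivity) (by norm_num)
        nlinarith [Nat.cast_nonneg (α := ℝ) n]
    _ ≤ (1/2:ℝ)^n := by rw [div_one, pow_succ]; nlinarith [pow_nonneg (by norm_num : (0:ℝ) ≤ 1/2) n]

lemma Sb : Summable (fun n : ℕ => (1/2:ℝ)^(n+1)/((n:ℝ)+1)^3) := by
  apply Summable.of_nonneg_of_le (fun n => by positivity) (fun n => ?_) Sa
  apply div_le_div_of_nonneg_left (by positivity) (by positivity)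
  calc ((n:ℝ)+1)^2 = ((n:ℝ)+1)^2 * 1 := by ring
    _ ≤ ((n:ℝ)+1)^2 * ((n:ℝ)+1) := by
        apply mul_le_mul_of_nonneg_left _ (by positivity)
        linarith [Nat.cast_nonneg (α := ℝ) n]
    _ = ((n:ℝ)+1)^3 := by ring

lemma hZ2 : HasSum (fun k : ℕ => 1/((k:ℝ)+1)^2) (Real.pi^2/6) := by
  have h := hasSum_zeta_two
  have h2 := (hasSum_nat_add_iff (f := fun n : ℕ => (1:ℝ)/(n:ℝ)^2) 1).2 (by simpa using h)
  have : ∀ k : ℕ, (1:ℝ)/((k+1:ℕ):ℝ)^2 = 1/((k:ℝ)+1)^2 := fun k => by push_cast; ring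
  simpa [this] using h2

lemma SZ3 : Summable (fun m : ℕ => 1/((m:ℝ)+1)^3) := by
  apply Summable.of_nonneg_of_le (fun n => by positivity) (fun n => ?_) hZ2.summable
  apply div_le_div_of_nonneg_left (by positivity) (by positivity)
  calc ((n:ℝ)+1)^2 = ((n:ℝ)+1)^2 * 1 := by ring
    _ ≤ ((n:ℝ)+1)^2 * ((n:ℝ)+1) := by
        apply mul_le_mul_of_nonneg_left _ (by positivity)
        linarith [Nat.cast_nonneg (α := ℝ) n]
    _ = ((n:ℝ)+1)^3 := by ring

lemma deriv_phi (k : ℕ) {x : ℝ} (hx : 0 < x) :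
    HasDerivAt (fun x : ℝ => x^(k+1)/((k:ℝ)+1)^2 - x^(k+1)*Real.log x/((k:ℝ)+1))
      (x^k * (-Real.log x)) x := by
  have hk : ((k:ℝ)+1) ≠ 0 := by positivity
  have h1 : HasDerivAt (fun x : ℝ => x^(k+1)) (((k:ℝ)+1) * x^k) x := by
    simpa using hasDerivAt_pow (k+1) x
  have h2 : HasDerivAt (fun x : ℝ => x^(k+1)*Real.log x)
      (((k:ℝ)+1) * x^k * Real.log x + x^(k+1) * x⁻¹) x := h1.mul (Real.hasDerivAt_log hx.ne')
  have := (h1.div_const (((k:ℝ)+1)^2)).sub (h2.div_const ((k:ℝ)+1))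
  refine this.congr_deriv ?_
  have hxne : x ≠ 0 := hx.ne'
  field_simp
  ring

lemma cont_pow_neg_log (k : ℕ) : ContinuousOn (fun x : ℝ => x^k * (-Real.log x)) (Icc (1/2) 1) := by
  apply ContinuousOn.mul (continuousOn_pow k)
  apply ContinuousOn.neg
  apply Real.continuousOn_log.mono
  intro x hx
  simp only [mem_compl_iff, mem_singleton_iff]
  rintro rfl
  exact absurd hx (by norm_num)

lemma int_pow_neg_log (k : ℕ) : ∫ x in (1/2:ℝ)..1, x^k * (-Real.log x)
    = 1/((k:ℝ)+1)^2 - (1/2)^(k+1)/((k:ℝ)+1)^2 - (1/2:ℝ)^(k+1)*Real.log 2/((k:ℝ)+1) := by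
  rw [intervalIntegral.integral_eq_sub_of_hasDerivAt
    (f := fun x : ℝ => x^(k+1)/((k:ℝ)+1)^2 - x^(k+1)*Real.log x/((k:ℝ)+1))
    (fun x hx => deriv_phi k (by
      rw [Set.uIcc_of_le (by norm_num : (1/2:ℝ) ≤ 1)] at hx
      linarith [hx.1]))
    (((cont_pow_neg_log k).mono (by rw [Set.uIcc_of_le (by norm_num : (1/2:ℝ) ≤ 1)])).intervalIntegrable)]
  have : Real.log (1/2 : ℝ) = -Real.log 2 := by
    rw [one_div, Real.log_inv]
  rw [this]
  simp [Real.log_one]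
  ring

lemma deriv_psi (k : ℕ) {x : ℝ} (hx : 0 < x) :
    HasDerivAt (fun x : ℝ => x^(k+1)*(Real.log x)^2/((k:ℝ)+1)
      - 2*(x^(k+1)*Real.log x)/((k:ℝ)+1)^2 + 2*x^(k+1)/((k:ℝ)+1)^3)
      (x^k * (Real.log x)^2) x := by
  have hk : ((k:ℝ)+1) ≠ 0 := by positivity
  have hxne : x ≠ 0 := hx.ne'
  have h1 : HasDerivAt (fun x : ℝ => x^(k+1)) (((k:ℝ)+1) * x^k) x := by
    simpa using hasDerivAt_pow (k+1) x
  have hlog := Real.hasDerivAt_log hx.ne'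
  have h2 : HasDerivAt (fun x : ℝ => (Real.log x)^2) (2 * Real.log x ^ 1 * x⁻¹) x := by
    simpa using hlog.fun_pow 2
  have h3 : HasDerivAt (fun x : ℝ => x^(k+1)*(Real.log x)^2)
      (((k:ℝ)+1) * x^k * (Real.log x)^2 + x^(k+1) * (2 * Real.log x ^ 1 * x⁻¹)) x := h1.mul h2
  have h4 : HasDerivAt (fun x : ℝ => x^(k+1)*Real.log x)
      (((k:ℝ)+1) * x^k * Real.log x + x^(k+1) * x⁻¹) x := h1.mul hlog
  have := ((h3.div_const ((k:ℝ)+1)).sub ((h4.const_mul 2).div_const (((k:ℝ)+1)^2))).add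
    ((h1.const_mul 2).div_const (((k:ℝ)+1)^3))
  refine this.congr_deriv ?_
  field_simp
  ring

lemma cont_pow_sq_log (k : ℕ) : ContinuousOn (fun x : ℝ => x^k * (Real.log x)^2) (Icc (1/2) 1) := by
  apply ContinuousOn.mul (continuousOn_pow k)
  apply ContinuousOn.pow
  apply Real.continuousOn_log.mono
  intro x hx
  simp only [mem_compl_iff, mem_singleton_iff]
  rintro rfl
  exact absurd hx (by norm_num)

lemma int_pow_sq_log (k : ℕ) : ∫ x in (1/2:ℝ)..1, x^k * (Real.log x)^2
    = 2/((k:ℝ)+1)^3 - (1/2:ℝ)^(k+1)*(Real.log 2)^2/((k:ℝ)+1)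
      - 2*(1/2:ℝ)^(k+1)*Real.log 2/((k:ℝ)+1)^2 - 2*(1/2:ℝ)^(k+1)/((k:ℝ)+1)^3 := by
  rw [intervalIntegral.integral_eq_sub_of_hasDerivAt
    (f := fun x : ℝ => x^(k+1)*(Real.log x)^2/((k:ℝ)+1)
      - 2*(x^(k+1)*Real.log x)/((k:ℝ)+1)^2 + 2*x^(k+1)/((k:ℝ)+1)^3)
    (fun x hx => deriv_psi k (by
      rw [Set.uIcc_of_le (by norm_num : (1/2:ℝ) ≤ 1)] at hx
      linarith [hx.1]))
    (((cont_pow_sq_log k).mono (by rw [Set.uIcc_of_le (by norm_num : (1/2:ℝ) ≤ 1)])).intervalIntegrable)]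
  have : Real.log (1/2 : ℝ) = -Real.log 2 := by
    rw [one_div, Real.log_inv]
  rw [this]
  simp [Real.log_one]
  ring

noncomputable def aa : ℝ := ∑' n : ℕ, (1/2:ℝ)^(n+1)/((n:ℝ)+1)^2
noncomputable def bb : ℝ := ∑' n : ℕ, (1/2:ℝ)^(n+1)/((n:ℝ)+1)^3

lemma haa : HasSum (fun n : ℕ => (1/2:ℝ)^(n+1)/((n:ℝ)+1)^2) aa := Sa.hasSum
lemma hbb : HasSum (fun n : ℕ => (1/2:ℝ)^(n+1)/((n:ℝ)+1)^3) bb := Sb.hasSum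

lemma ptB1 {x : ℝ} (hx : x ∈ Ioc (0:ℝ) (1/2)) :
    HasSum (fun n : ℕ => x^n/((n:ℝ)+1)) (-Real.log (1-x)/x) := by
  obtain ⟨hx0, hx2⟩ := hx
  have habs : |x| < 1 := by rw [abs_of_pos hx0]; linarith
  have h2 := (Real.hasSum_pow_div_log_of_abs_lt_one habs).div_const x
  have heq : (fun n : ℕ => x^(n+1)/((n:ℝ)+1)/x) = (fun n : ℕ => x^n/((n:ℝ)+1)) := by
    funext n
    rw [pow_succ]
    field_simp
  rwa [heq] at h2

lemma hc (n : ℕ) : ∑ kl ∈ Finset.HasAntidiagonal.antidiagonal n, (1/((kl.1:ℝ)+1)) * (1/((kl.2:ℝ)+1))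
    = 2*Hh (n+1)/((n:ℝ)+2) := by
  rw [Finset.Nat.sum_antidiagonal_eq_sum_range_succ (fun i j => (1/((i:ℝ)+1)) * (1/((j:ℝ)+1)))]
  have key : ∀ i ∈ Finset.range (n+1), (1/((i:ℝ)+1)) * (1/(((n-i:ℕ):ℝ)+1))
      = (1/((n:ℝ)+2)) * (1/((i:ℝ)+1) + 1/(((n-i:ℕ):ℝ)+1)) := by
    intro i hi
    rw [Finset.mem_range] at hi
    have hle : i ≤ n := Nat.lt_succ_iff.mp hi
    have hcast : ((n-i:ℕ):ℝ) = (n:ℝ) - (i:ℝ) := by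
      rw [Nat.cast_sub hle]
    rw [hcast]
    have h1 : (i:ℝ)+1 ≠ 0 := by positivity
    have h2 : (n:ℝ) - (i:ℝ) + 1 > 0 := by
      have : (i:ℝ) ≤ (n:ℝ) := by exact_mod_cast hle
      linarith
    have h3 : (n:ℝ) + 2 ≠ 0 := by positivity
    field_simp
    ring
  rw [Finset.sum_congr rfl key, ← Finset.mul_sum, Finset.sum_add_distrib]
  have hrefl : ∑ i ∈ Finset.range (n+1), 1/(((n-i:ℕ):ℝ)+1)
      = ∑ i ∈ Finset.range (n+1), 1/((i:ℝ)+1) := by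
    have := Finset.sum_range_reflect (fun j => 1/((j:ℝ)+1)) (n+1)
    simpa using this
  rw [hrefl]
  have : ∑ i ∈ Finset.range (n+1), 1/((i:ℝ)+1) = Hh (n+1) := rfl
  rw [this]
  ring

lemma ptA1 {x : ℝ} (hx : x ∈ Ioc (0:ℝ) (1/2)) :
    ∑' N : ℕ, 2*Hh (N+1)/((N:ℝ)+2)*x^(N+1) = (Real.log (1-x))^2/x := by
  obtain ⟨hx0, hx2⟩ := hx
  have hxne : x ≠ 0 := hx0.ne'
  have habs : |x| < 1 := by rw [abs_of_pos hx0]; linarith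
  have hf := Real.hasSum_pow_div_log_of_abs_lt_one habs
  have hnorm : Summable (fun n : ℕ => ‖x^(n+1)/((n:ℝ)+1)‖) := by
    apply Summable.of_nonneg_of_le (fun n => norm_nonneg _) (fun n => ?_)
      (summable_geometric_of_lt_one (by norm_num) (by norm_num : (1/2:ℝ) < 1))
    rw [norm_div, norm_pow]
    calc |x|^(n+1)/‖((n:ℝ)+1)‖ ≤ |x|^(n+1)/1 := by
          apply div_le_div_of_nonneg_left (by positivity) (by norm_num)
          rw [Real.norm_eq_abs, abs_of_pos (by positivity)]
          linarith [Nat.cast_nonneg (α := ℝ) n]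
      _ ≤ (1/2:ℝ)^(n+1) := by
          rw [div_one]
          exact pow_le_pow_left₀ (abs_nonneg x) (by rw [abs_of_pos hx0]; linarith) (n+1)
      _ ≤ (1/2:ℝ)^n := by
          apply pow_le_pow_of_le_one (by norm_num) (by norm_num)
          omega
  have hcauchy := tsum_mul_tsum_eq_tsum_sum_antidiagonal_of_summable_norm hnorm hnorm
  rw [hf.tsum_eq] at hcauchy
  have hinner : ∀ n : ℕ, ∑ kl ∈ Finset.HasAntidiagonal.antidiagonal n,
      (x^(kl.1+1)/((kl.1:ℝ)+1)) * (x^(kl.2+1)/((kl.2:ℝ)+1))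
      = x^(n+2) * (2*Hh (n+1)/((n:ℝ)+2)) := by
    intro n
    have : ∀ kl ∈ Finset.HasAntidiagonal.antidiagonal n,
        (x^(kl.1+1)/((kl.1:ℝ)+1)) * (x^(kl.2+1)/((kl.2:ℝ)+1))
        = x^(n+2) * ((1/((kl.1:ℝ)+1)) * (1/((kl.2:ℝ)+1))) := by
      intro kl hkl
      have hsum : kl.1 + kl.2 = n := Finset.HasAntidiagonal.mem_antidiagonal.mp hkl
      rw [div_mul_div_comm, ← pow_add]
      have : kl.1 + 1 + (kl.2 + 1) = n + 2 := by omega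
      rw [this]
      have h1 : ((kl.1:ℝ)+1) ≠ 0 := by positivity
      have h2 : ((kl.2:ℝ)+1) ≠ 0 := by positivity
      field_simp
    rw [Finset.sum_congr rfl this, ← Finset.mul_sum, hc]
  rw [tsum_congr hinner] at hcauchy
  have hgoal : ∀ N : ℕ, 2*Hh (N+1)/((N:ℝ)+2)*x^(N+1)
      = (x^(N+2) * (2*Hh (N+1)/((N:ℝ)+2)))/x := by
    intro N
    rw [pow_succ _ (N+1)]
    field_simp
  rw [tsum_congr hgoal, tsum_div_const, ← hcauchy]
  ring_nf

lemma ptB2 {x : ℝ} (hx : x ∈ Ioc (1/2:ℝ) 1) :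
    ∑' k : ℕ, x^k * (-Real.log x) = (-Real.log x)/(1-x) := by
  obtain ⟨hx1, hx2⟩ := hx
  rcases eq_or_lt_of_le hx2 with rfl | hlt
  · simp
  · have h := (hasSum_geometric_of_lt_one (by linarith) hlt).mul_right (-Real.log x)
    rw [h.tsum_eq, inv_mul_eq_div]

lemma ptA2 {x : ℝ} (hx : x ∈ Ioc (1/2:ℝ) 1) :
    ∑' k : ℕ, x^k * (Real.log x)^2 = (Real.log x)^2/(1-x) := by
  obtain ⟨hx1, hx2⟩ := hx
  rcases eq_or_lt_of_le hx2 with rfl | hlt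
  · simp
  · have h := (hasSum_geometric_of_lt_one (by linarith) hlt).mul_right ((Real.log x)^2)
    rw [h.tsum_eq, inv_mul_eq_div]

lemma intval_pow (n : ℕ) : ∫ x in Ioc (0:ℝ) (1/2), x^n/((n:ℝ)+1)
    = (1/2:ℝ)^(n+1)/((n:ℝ)+1)^2 := by
  rw [← intervalIntegral.integral_of_le (by norm_num : (0:ℝ) ≤ 1/2),
    intervalIntegral.integral_div, integral_pow]
  norm_num
  rw [div_div, ← pow_two]

lemma intval_powA (N : ℕ) : ∫ x in Ioc (0:ℝ) (1/2), 2*Hh (N+1)/((N:ℝ)+2)*x^(N+1)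
    = 2*Hh (N+1)*(1/2:ℝ)^(N+2)/((N:ℝ)+2)^2 := by
  rw [← intervalIntegral.integral_of_le (by norm_num : (0:ℝ) ≤ 1/2),
    intervalIntegral.integral_const_mul, integral_pow]
  push_cast
  norm_num
  rw [div_mul_div_comm]
  norm_num
  ring

lemma swapB1 : ∫ x in Ioc (0:ℝ) (1/2), (-Real.log (1-x))/x = aa := by
  have hpt : ∀ x ∈ Ioc (0:ℝ) (1/2), (-Real.log (1-x))/x = ∑' n : ℕ, x^n/((n:ℝ)+1) :=
    fun x hx => ((ptB1 hx).tsum_eq).symm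
  rw [setIntegral_congr_fun measurableSet_Ioc hpt]
  have hint : ∀ n : ℕ, Integrable (fun x : ℝ => x^n/((n:ℝ)+1))
      (volume.restrict (Ioc (0:ℝ) (1/2))) :=
    fun n => ((continuous_pow n).div_const _).integrableOn_Ioc
  have hnormval : ∀ n : ℕ, (∫ x in Ioc (0:ℝ) (1/2), ‖x^n/((n:ℝ)+1)‖)
      = (1/2:ℝ)^(n+1)/((n:ℝ)+1)^2 := by
    intro n
    rw [setIntegral_congr_fun measurableSet_Ioc (g := fun x : ℝ => x^n/((n:ℝ)+1))
      (fun x hx => by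
        rw [Real.norm_eq_abs,
          abs_of_nonneg (div_nonneg (pow_nonneg hx.1.le n) (by positivity))])]
    exact intval_pow n
  have hsumnorm : Summable (fun n : ℕ => ∫ x in Ioc (0:ℝ) (1/2), ‖x^n/((n:ℝ)+1)‖) := by
    rw [funext hnormval]
    exact Sa
  rw [← MeasureTheory.integral_tsum_of_summable_integral_norm hint hsumnorm]
  rw [tsum_congr intval_pow]
  rfl

lemma swapA1 : ∫ x in Ioc (0:ℝ) (1/2), (Real.log (1-x))^2/x
    = ∑' N : ℕ, 2*Hh (N+1)*(1/2:ℝ)^(N+2)/((N:ℝ)+2)^2 := by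
  have hpt : ∀ x ∈ Ioc (0:ℝ) (1/2), (Real.log (1-x))^2/x
      = ∑' N : ℕ, 2*Hh (N+1)/((N:ℝ)+2)*x^(N+1) :=
    fun x hx => (ptA1 hx).symm
  rw [setIntegral_congr_fun measurableSet_Ioc hpt]
  have hint : ∀ N : ℕ, Integrable (fun x : ℝ => 2*Hh (N+1)/((N:ℝ)+2)*x^(N+1))
      (volume.restrict (Ioc (0:ℝ) (1/2))) :=
    fun N => (continuous_const.mul (continuous_pow (N+1))).integrableOn_Ioc
  have hnormval : ∀ N : ℕ, (∫ x in Ioc (0:ℝ) (1/2), ‖2*Hh (N+1)/((N:ℝ)+2)*x^(N+1)‖)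
      = 2*Hh (N+1)*(1/2:ℝ)^(N+2)/((N:ℝ)+2)^2 := by
    intro N
    rw [setIntegral_congr_fun measurableSet_Ioc
      (g := fun x : ℝ => 2*Hh (N+1)/((N:ℝ)+2)*x^(N+1))
      (fun x hx => by
        rw [Real.norm_eq_abs, abs_of_nonneg (mul_nonneg
          (div_nonneg (by linarith [Hh_nonneg (N+1)]) (by positivity))
          (pow_nonneg hx.1.le (N+1)))])]
    exact intval_powA N
  have hsumnorm : Summable (fun N : ℕ => ∫ x in Ioc (0:ℝ) (1/2), ‖2*Hh (N+1)/((N:ℝ)+2)*x^(N+1)‖) := by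
    rw [funext hnormval]
    apply Summable.of_nonneg_of_le (fun N => div_nonneg
        (by nlinarith [Hh_nonneg (N+1), pow_nonneg (by norm_num : (0:ℝ) ≤ 1/2) (N+2)])
        (by positivity)) (fun N => ?_)
      (summable_geometric_of_lt_one (by norm_num) (by norm_num : (1/2:ℝ) < 1))
    have h1 : Hh (N+1) ≤ (N:ℝ)+2 := by
      calc Hh (N+1) ≤ ((N+1:ℕ):ℝ) := Hh_le (N+1)
        _ ≤ (N:ℝ)+2 := by push_cast; linarith
    have h2 : (0:ℝ) < (N:ℝ)+2 := by positivity
    calc 2*Hh (N+1)*(1/2:ℝ)^(N+2)/((N:ℝ)+2)^2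
        ≤ 2*((N:ℝ)+2)*(1/2:ℝ)^(N+2)/((N:ℝ)+2)^2 := by
          apply div_le_div_of_nonneg_right ?_ (by positivity)
          apply mul_le_mul_of_nonneg_right _ (by positivity)
          nlinarith [Hh_nonneg (N+1)]
      _ = 2*(1/2:ℝ)^(N+2)/((N:ℝ)+2) := by field_simp
      _ ≤ 2*(1/2:ℝ)^(N+2)/1 := by
          apply div_le_div_of_nonneg_left (by positivity) (by norm_num)
          linarith
      _ = (1/2:ℝ)^(N+1) := by rw [div_one, pow_succ]; ring
      _ ≤ (1/2:ℝ)^N := by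
          apply pow_le_pow_of_le_one (by norm_num) (by norm_num)
          omega
  rw [← MeasureTheory.integral_tsum_of_summable_integral_norm hint hsumnorm]
  exact tsum_congr intval_powA

lemma ival_negB (k : ℕ) : ∫ x in Ioc (1/2:ℝ) 1, x^k*(-Real.log x)
    = 1/((k:ℝ)+1)^2 - (1/2)^(k+1)/((k:ℝ)+1)^2 - (1/2:ℝ)^(k+1)*Real.log 2/((k:ℝ)+1) := by
  rw [← intervalIntegral.integral_of_le (by norm_num : (1/2:ℝ) ≤ 1)]
  exact int_pow_neg_log k

lemma ival_sqA (k : ℕ) : ∫ x in Ioc (1/2:ℝ) 1, x^k*(Real.log x)^2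
    = 2/((k:ℝ)+1)^3 - (1/2:ℝ)^(k+1)*(Real.log 2)^2/((k:ℝ)+1)
      - 2*(1/2:ℝ)^(k+1)*Real.log 2/((k:ℝ)+1)^2 - 2*(1/2:ℝ)^(k+1)/((k:ℝ)+1)^3 := by
  rw [← intervalIntegral.integral_of_le (by norm_num : (1/2:ℝ) ≤ 1)]
  exact int_pow_sq_log k

lemma norm_negB {x : ℝ} (hx : x ∈ Ioc (1/2:ℝ) 1) (k : ℕ) :
    ‖x^k*(-Real.log x)‖ = x^k*(-Real.log x) := by
  rw [Real.norm_eq_abs, abs_of_nonneg]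
  apply mul_nonneg (pow_nonneg (by linarith [hx.1]) k)
  simp only [neg_nonneg]
  exact Real.log_nonpos (by linarith [hx.1]) hx.2

lemma swapB2 : ∫ x in Ioc (1/2:ℝ) 1, (-Real.log x)/(1-x)
    = Real.pi^2/6 - aa - Real.log 2 * Real.log 2 := by
  have hpt : ∀ x ∈ Ioc (1/2:ℝ) 1, (-Real.log x)/(1-x) = ∑' k : ℕ, x^k*(-Real.log x) :=
    fun x hx => (ptB2 hx).symm
  rw [setIntegral_congr_fun measurableSet_Ioc hpt]
  have hint : ∀ k : ℕ, Integrable (fun x : ℝ => x^k*(-Real.log x))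
      (volume.restrict (Ioc (1/2:ℝ) 1)) :=
    fun k => ((cont_pow_neg_log k).integrableOn_Icc).mono_set Ioc_subset_Icc_self
  have hv : HasSum (fun k : ℕ => 1/((k:ℝ)+1)^2 - (1/2)^(k+1)/((k:ℝ)+1)^2
      - ((1/2:ℝ)^(k+1)/((k:ℝ)+1)) * Real.log 2) (Real.pi^2/6 - aa - Real.log 2 * Real.log 2) :=
    (hZ2.sub haa).sub (hL.mul_right _)
  have hveq : ∀ k : ℕ, (∫ x in Ioc (1/2:ℝ) 1, ‖x^k*(-Real.log x)‖)
      = 1/((k:ℝ)+1)^2 - (1/2)^(k+1)/((k:ℝ)+1)^2 - ((1/2:ℝ)^(k+1)/((k:ℝ)+1)) * Real.log 2 := by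
    intro k
    rw [setIntegral_congr_fun measurableSet_Ioc (g := fun x : ℝ => x^k*(-Real.log x))
      (fun x hx => norm_negB hx k), ival_negB k]
    ring
  have hsumnorm : Summable (fun k : ℕ => ∫ x in Ioc (1/2:ℝ) 1, ‖x^k*(-Real.log x)‖) := by
    rw [funext hveq]
    exact hv.summable
  rw [← MeasureTheory.integral_tsum_of_summable_integral_norm hint hsumnorm]
  have : ∀ k : ℕ, (∫ x in Ioc (1/2:ℝ) 1, x^k*(-Real.log x))
      = 1/((k:ℝ)+1)^2 - (1/2)^(k+1)/((k:ℝ)+1)^2 - ((1/2:ℝ)^(k+1)/((k:ℝ)+1)) * Real.log 2 := by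
    intro k
    rw [ival_negB k]
    ring
  rw [tsum_congr this, hv.tsum_eq]

lemma norm_sqA {x : ℝ} (hx : x ∈ Ioc (1/2:ℝ) 1) (k : ℕ) :
    ‖x^k*(Real.log x)^2‖ = x^k*(Real.log x)^2 := by
  rw [Real.norm_eq_abs, abs_of_nonneg]
  exact mul_nonneg (pow_nonneg (by linarith [hx.1]) k) (sq_nonneg _)

lemma swapA2 : ∫ x in Ioc (1/2:ℝ) 1, (Real.log x)^2/(1-x)
    = 2*(∑' m : ℕ, 1/((m:ℝ)+1)^3) - (Real.log 2)^2 * Real.log 2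
      - 2*Real.log 2 * aa - 2*bb := by
  have hpt : ∀ x ∈ Ioc (1/2:ℝ) 1, (Real.log x)^2/(1-x) = ∑' k : ℕ, x^k*(Real.log x)^2 :=
    fun x hx => (ptA2 hx).symm
  rw [setIntegral_congr_fun measurableSet_Ioc hpt]
  have hint : ∀ k : ℕ, Integrable (fun x : ℝ => x^k*(Real.log x)^2)
      (volume.restrict (Ioc (1/2:ℝ) 1)) :=
    fun k => ((cont_pow_sq_log k).integrableOn_Icc).mono_set Ioc_subset_Icc_self
  have hZ3 : HasSum (fun m : ℕ => 1/((m:ℝ)+1)^3) (∑' m : ℕ, 1/((m:ℝ)+1)^3) := SZ3.hasSum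
  have hv : HasSum (fun k : ℕ => (1/((k:ℝ)+1)^3) * 2
      - ((1/2:ℝ)^(k+1)/((k:ℝ)+1)) * ((Real.log 2)^2)
      - ((1/2:ℝ)^(k+1)/((k:ℝ)+1)^2) * (2*Real.log 2) - ((1/2:ℝ)^(k+1)/((k:ℝ)+1)^3) * 2)
      ((∑' m : ℕ, 1/((m:ℝ)+1)^3) * 2 - Real.log 2 * (Real.log 2)^2
        - aa * (2*Real.log 2) - bb * 2) :=
    (((hZ3.mul_right 2).sub (hL.mul_right _)).sub (haa.mul_right _)).sub (hbb.mul_right 2)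
  have hveq : ∀ k : ℕ, (∫ x in Ioc (1/2:ℝ) 1, ‖x^k*(Real.log x)^2‖)
      = (1/((k:ℝ)+1)^3) * 2 - ((1/2:ℝ)^(k+1)/((k:ℝ)+1)) * ((Real.log 2)^2)
      - ((1/2:ℝ)^(k+1)/((k:ℝ)+1)^2) * (2*Real.log 2) - ((1/2:ℝ)^(k+1)/((k:ℝ)+1)^3) * 2 := by
    intro k
    rw [setIntegral_congr_fun measurableSet_Ioc (g := fun x : ℝ => x^k*(Real.log x)^2)
      (fun x hx => norm_sqA hx k), ival_sqA k]
    ring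
  have hsumnorm : Summable (fun k : ℕ => ∫ x in Ioc (1/2:ℝ) 1, ‖x^k*(Real.log x)^2‖) := by
    rw [funext hveq]
    exact hv.summable
  rw [← MeasureTheory.integral_tsum_of_summable_integral_norm hint hsumnorm]
  have : ∀ k : ℕ, (∫ x in Ioc (1/2:ℝ) 1, x^k*(Real.log x)^2)
      = (1/((k:ℝ)+1)^3) * 2 - ((1/2:ℝ)^(k+1)/((k:ℝ)+1)) * ((Real.log 2)^2)
      - ((1/2:ℝ)^(k+1)/((k:ℝ)+1)^2) * (2*Real.log 2) - ((1/2:ℝ)^(k+1)/((k:ℝ)+1)^3) * 2 := by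
    intro k
    rw [ival_sqA k]
    ring
  rw [tsum_congr this, hv.tsum_eq]
  ring

lemma subM : ∫ x in Ioc (0:ℝ) (1/2), (-Real.log (1-x))/x
    = ∫ x in Ioc (1/2:ℝ) 1, (-Real.log x)/(1-x) := by
  rw [← intervalIntegral.integral_of_le (by norm_num : (0:ℝ) ≤ 1/2),
    ← intervalIntegral.integral_of_le (by norm_num : (1/2:ℝ) ≤ 1)]
  have h := intervalIntegral.integral_comp_sub_left (a := 0) (b := 1/2)
    (fun u : ℝ => (-Real.log u)/(1-u)) 1
  simp only [sub_sub_cancel] at h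
  norm_num at h
  convert h using 1

lemma subK : ∫ x in Ioc (0:ℝ) (1/2), (Real.log (1-x))^2/x
    = ∫ x in Ioc (1/2:ℝ) 1, (Real.log x)^2/(1-x) := by
  rw [← intervalIntegral.integral_of_le (by norm_num : (0:ℝ) ≤ 1/2),
    ← intervalIntegral.integral_of_le (by norm_num : (1/2:ℝ) ≤ 1)]
  have h := intervalIntegral.integral_comp_sub_left (a := 0) (b := 1/2)
    (fun u : ℝ => (Real.log u)^2/(1-u)) 1
  simp only [sub_sub_cancel] at h
  norm_num at h
  convert h using 1

lemma key2 : Real.pi^2/6 = 2*aa + Real.log 2 * Real.log 2 := by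
  have h := swapB1
  rw [subM, swapB2] at h
  linarith

lemma SK : Summable (fun N : ℕ => 2*Hh (N+1)*(1/2:ℝ)^(N+2)/((N:ℝ)+2)^2) := by
  apply Summable.of_nonneg_of_le (fun N => div_nonneg
      (by nlinarith [Hh_nonneg (N+1), pow_nonneg (by norm_num : (0:ℝ) ≤ 1/2) (N+2)])
      (by positivity)) (fun N => ?_)
    (summable_geometric_of_lt_one (by norm_num) (by norm_num : (1/2:ℝ) < 1))
  have h1 : Hh (N+1) ≤ (N:ℝ)+2 := by
    calc Hh (N+1) ≤ ((N+1:ℕ):ℝ) := Hh_le (N+1)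
      _ ≤ (N:ℝ)+2 := by push_cast; linarith
  calc 2*Hh (N+1)*(1/2:ℝ)^(N+2)/((N:ℝ)+2)^2
      ≤ 2*((N:ℝ)+2)*(1/2:ℝ)^(N+2)/((N:ℝ)+2)^2 := by
        apply div_le_div_of_nonneg_right ?_ (by positivity)
        apply mul_le_mul_of_nonneg_right _ (by positivity)
        nlinarith [Hh_nonneg (N+1)]
    _ = 2*(1/2:ℝ)^(N+2)/((N:ℝ)+2) := by field_simp
    _ ≤ 2*(1/2:ℝ)^(N+2)/1 := by
        apply div_le_div_of_nonneg_left (by positivity) (by norm_num)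
        linarith [Nat.cast_nonneg (α := ℝ) N]
    _ = (1/2:ℝ)^(N+1) := by rw [div_one, pow_succ]; ring
    _ ≤ (1/2:ℝ)^N := by
        apply pow_le_pow_of_le_one (by norm_num) (by norm_num)
        omega

lemma key3 : ∑' N : ℕ, 2*Hh (N+1)*(1/2:ℝ)^(N+2)/((N:ℝ)+2)^2
    = 2*(∑' m : ℕ, 1/((m:ℝ)+1)^3) - (Real.log 2)^2 * Real.log 2
      - 2*Real.log 2 * aa - 2*bb := by
  rw [← swapA1, subK, swapA2]

lemma hS' : HasSum (fun n : ℕ => Hh (n+1) * ((1/2:ℝ)^(n+1)/((n:ℝ)+1)^2))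
    ((∑' m : ℕ, 1/((m:ℝ)+1)^3) - (Real.log 2)^2 * Real.log 2/2 - Real.log 2 * aa) := by
  have hK : HasSum (fun N : ℕ => 2*Hh (N+1)*(1/2:ℝ)^(N+2)/((N:ℝ)+2)^2)
      (2*(∑' m : ℕ, 1/((m:ℝ)+1)^3) - (Real.log 2)^2 * Real.log 2
        - 2*Real.log 2 * aa - 2*bb) := by
    rw [← key3]
    exact SK.hasSum
  have ht1 : HasSum (fun N : ℕ => Hh (N+1) * ((1/2:ℝ)^(N+2)/(((N:ℝ)+1)+1)^2))
      ((∑' m : ℕ, 1/((m:ℝ)+1)^3) - (Real.log 2)^2 * Real.log 2/2 - Real.log 2 * aa - bb) := by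
    have := hK.div_const 2
    have heq : (fun N : ℕ => 2*Hh (N+1)*(1/2:ℝ)^(N+2)/((N:ℝ)+2)^2/2)
        = (fun N : ℕ => Hh (N+1) * ((1/2:ℝ)^(N+2)/(((N:ℝ)+1)+1)^2)) := by
      funext N
      have : ((N:ℝ)+1)+1 = (N:ℝ)+2 := by ring
      rw [this]
      ring
    rw [heq] at this
    convert this using 1
    · rfl
    ring
  have ht : HasSum (fun n : ℕ => Hh n * ((1/2:ℝ)^(n+1)/((n:ℝ)+1)^2))
      ((∑' m : ℕ, 1/((m:ℝ)+1)^3) - (Real.log 2)^2 * Real.log 2/2 - Real.log 2 * aa - bb) := by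
    have h2 := (hasSum_nat_add_iff
      (f := fun n : ℕ => Hh n * ((1/2:ℝ)^(n+1)/((n:ℝ)+1)^2)) 1).1 (by
        have : (fun N : ℕ => Hh (N+1) * ((1/2:ℝ)^(N+1+1)/(((N+1:ℕ):ℝ)+1)^2))
            = (fun N : ℕ => Hh (N+1) * ((1/2:ℝ)^(N+2)/(((N:ℝ)+1)+1)^2)) := by
          funext N
          push_cast
          ring_nf
        rw [this]
        exact ht1)
    simpa [Hh] using h2
  have := ht.add hbb
  have heq : (fun n : ℕ => Hh n * ((1/2:ℝ)^(n+1)/((n:ℝ)+1)^2) + (1/2:ℝ)^(n+1)/((n:ℝ)+1)^3)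
      = (fun n : ℕ => Hh (n+1) * ((1/2:ℝ)^(n+1)/((n:ℝ)+1)^2)) := by
    funext n
    rw [Hh_succ]
    have hne : ((n:ℝ)+1) ≠ 0 := by positivity
    field_simp
  rw [heq] at this
  convert this using 1
  ring

noncomputable def ee : (Σ n : ℕ, Fin n) ≃ {p : ℕ × ℕ // p.2 ≤ p.1 ∧ 1 ≤ p.2} where
  toFun := fun x => ⟨(x.1, x.2.val+1), ⟨Nat.succ_le_of_lt x.2.isLt, Nat.succ_le_succ (Nat.zero_le _)⟩⟩
  invFun := fun p => ⟨p.1.1, ⟨p.1.2 - 1, by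
    have h1 := p.2.1
    have h2 := p.2.2
    omega⟩⟩
  left_inv := fun x => by
    ext
    · rfl
    · simp
  right_inv := fun p => by
    have h1 := p.2.1
    have h2 := p.2.2
    ext
    · rfl
    · simp only
      omega

lemma innerSumHh (n : ℕ) : ∑' m : Fin n, (1/2:ℝ)^n/((n:ℝ)^2 * (((m:ℕ):ℝ)+1))
    = (1/2:ℝ)^n * Hh n/(n:ℝ)^2 := by
  rw [tsum_fintype]
  have : ∀ m : Fin n, (1/2:ℝ)^n/((n:ℝ)^2 * (((m:ℕ):ℝ)+1))
      = ((1/2:ℝ)^n/(n:ℝ)^2) * (1/(((m:ℕ):ℝ)+1)) := by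
    intro m
    rw [div_mul_eq_div_div, ← mul_one_div]
  rw [Finset.sum_congr rfl (fun m _ => this m), ← Finset.mul_sum]
  rw [Fin.sum_univ_eq_sum_range (fun i => 1/((i:ℝ)+1)) n]
  have : ∑ i ∈ Finset.range n, 1/((i:ℝ)+1) = Hh n := rfl
  rw [this]
  ring

lemma outer_summable : Summable (fun n : ℕ => (1/2:ℝ)^n * Hh n/(n:ℝ)^2) := by
  apply Summable.of_nonneg_of_le (fun n => div_nonneg
      (mul_nonneg (by positivity) (Hh_nonneg n)) (by positivity)) (fun n => ?_)
    (summable_geometric_of_lt_one (by norm_num) (by norm_num : (1/2:ℝ) < 1))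
  rcases n with _ | k
  · simp [Hh]
  · have h1 : Hh (k+1) ≤ ((k+1:ℕ):ℝ) := Hh_le (k+1)
    have h2 : (0:ℝ) < ((k+1:ℕ):ℝ) := by positivity
    have h3 : ((k+1:ℕ):ℝ) ≤ ((k+1:ℕ):ℝ)^2 := by
      push_cast
      nlinarith [Nat.cast_nonneg (α := ℝ) k]
    calc (1/2:ℝ)^(k+1) * Hh (k+1)/((k+1:ℕ):ℝ)^2
        ≤ (1/2:ℝ)^(k+1) * ((k+1:ℕ):ℝ)^2/((k+1:ℕ):ℝ)^2 := by
          apply div_le_div_of_nonneg_right _ (by positivity)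
          apply mul_le_mul_of_nonneg_left _ (by positivity)
          linarith
      _ = (1/2:ℝ)^(k+1) := by
          field_simp

theorem Le_two_one_half :
    ∑' p : {p : ℕ × ℕ // p.2 ≤ p.1 ∧ 1 ≤ p.2},
        (1 / 2 : ℝ) ^ p.1.1 / ((p.1.1 : ℝ) ^ 2 * p.1.2) =
      (∑' m : ℕ, 1 / (m + 1 : ℝ) ^ 3) - (Real.pi ^ 2 / 12) * Real.log 2 := by
  have hequiv := Equiv.tsum_eq ee (fun p : {p : ℕ × ℕ // p.2 ≤ p.1 ∧ 1 ≤ p.2} =>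
    (1/2:ℝ)^p.1.1 / ((p.1.1:ℝ)^2 * p.1.2))
  rw [← hequiv]
  have hfun : (fun x : (Σ n : ℕ, Fin n) => (1/2:ℝ)^(ee x).1.1 / (((ee x).1.1:ℝ)^2 * (ee x).1.2))
      = (fun x : (Σ n : ℕ, Fin n) => (1/2:ℝ)^x.1/((x.1:ℝ)^2 * (((x.2:ℕ):ℝ)+1))) := by
    funext x
    rcases x with ⟨n, m⟩
    simp only [ee, Equiv.coe_fn_mk]
    push_cast
    ring_nf
  rw [hfun]
  have hsum : Summable (fun x : (Σ n : ℕ, Fin n) => (1/2:ℝ)^x.1/((x.1:ℝ)^2 * (((x.2:ℕ):ℝ)+1))) := by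
    rw [summable_sigma_of_nonneg (fun x => by positivity)]
    constructor
    · intro n
      exact (hasSum_fintype _).summable
    · have : (fun n : ℕ => ∑' m : Fin n, (1/2:ℝ)^n/((n:ℝ)^2 * (((m:ℕ):ℝ)+1)))
          = (fun n : ℕ => (1/2:ℝ)^n * Hh n/(n:ℝ)^2) := funext innerSumHh
      rw [this]
      exact outer_summable
  rw [hsum.tsum_sigma, tsum_congr innerSumHh]
  have ho1 : HasSum (fun n : ℕ => (1/2:ℝ)^(n+1) * Hh (n+1)/(((n+1:ℕ)):ℝ)^2)
      ((∑' m : ℕ, 1/((m:ℝ)+1)^3) - (Real.log 2)^2 * Real.log 2/2 - Real.log 2 * aa) := by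
    have heq : (fun n : ℕ => Hh (n+1) * ((1/2:ℝ)^(n+1)/((n:ℝ)+1)^2))
        = (fun n : ℕ => (1/2:ℝ)^(n+1) * Hh (n+1)/(((n+1:ℕ)):ℝ)^2) := by
      funext n
      push_cast
      ring
    rw [← heq]
    exact hS'
  have ho := (hasSum_nat_add_iff (f := fun n : ℕ => (1/2:ℝ)^n * Hh n/(n:ℝ)^2) 1).1 ho1
  have hoval : ∑' n : ℕ, (1/2:ℝ)^n * Hh n/(n:ℝ)^2
      = (∑' m : ℕ, 1/((m:ℝ)+1)^3) - (Real.log 2)^2 * Real.log 2/2 - Real.log 2 * aa := by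
    have h0 : ∑ i ∈ Finset.range 1, (1/2:ℝ)^i * Hh i/(i:ℝ)^2 = 0 := by
      simp [Hh]
    rw [h0, add_zero] at ho
    exact ho.tsum_eq
  rw [hoval]
  have haaval : aa = Real.pi^2/12 - Real.log 2 * Real.log 2/2 := by
    have := key2
    linarith
  rw [haaval]
  set Z := ∑' m : ℕ, 1/((m:ℝ)+1)^3 with hZ
  ring
end
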